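/- arXiv:2508.00182 — 3 statements merged into one kernel-verified Lean document; each statement's English description precedes it below -/
import Mathlib

section
/- Let d ≥ 2 and let (a_𝐧)_{𝐧∈ℕ₀^d} be complex numbers such that a_𝐧 ≠ 0 only if 𝐧 = 𝟎 or 𝐧 ∈ B_k for some k ∈ ℕ₀. Suppose the d-multiple series ∑_{𝐧∈ℕ₀^d} a_𝐧 converges over rectangles to S, i.e., the rectangular partial sums ∑_{𝐧<𝐍} a_𝐧 tend to S as min_j N^j → ∞. Then for every permutation (j_1,…,j_d) of (1,…,d) the iterated sum ∑_{n^{j_1}≥0} ( ∑_{n^{j_2}≥0} ( ⋯ ( ∑_{n^{j_d}≥0} a_{n^1,…,n^d} ) ) ) converges to S; in particular each inner series has only finitely many nonzero terms. -/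
open Filter Finset Topology MeasureTheory
open scoped Classical

noncomputable section

instance : TopologicalSpace (ZMod 2) := ⊥
instance : DiscreteTopology (ZMod 2) := ⟨rfl⟩

/-- The dyadic (Cantor) group `𝔾`: sequences of elements of `ℤ/2ℤ`
with coordinatewise addition modulo 2, Tychonoff topology. -/
abbrev DyadicGroup : Type := ℕ → ZMod 2

instance : MeasurableSpace DyadicGroup := borel _
instance : BorelSpace DyadicGroup := ⟨rfl⟩

/-- `𝔾^d`. -/
abbrev GD (d : ℕ) : Type := Fin d → DyadicGroup

/-- One-dimensional Walsh function `W_n` in the Paley enumeration: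
`W_n(g) = ∏_k (-1)^(g_k n_k)`. -/
def walsh (n : ℕ) (g : DyadicGroup) : ℝ :=
  ∏ k ∈ Finset.range n, if n.testBit k ∧ g k = 1 then (-1 : ℝ) else 1

/-- `d`-dimensional Walsh function `W_𝐧(𝐠) = ∏ W_{n^l}(g^l)`. -/
def walshD {d : ℕ} (n : Fin d → ℕ) (g : GD d) : ℝ :=
  ∏ l, walsh (n l) (g l)

/-- The dyadic interval `Δ^{(k)}_m` of rank `k`. -/
def dyadicInterval (k m : ℕ) : Set DyadicGroup :=
  {g | ∀ t < k, g t = if m.testBit (k - 1 - t) then 1 else 0}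

/-- The dyadic cube `Δ^{(k)}_𝐦 = Δ^{(k)}_{m^1} × ⋯ × Δ^{(k)}_{m^d}`. -/
def dyadicCube {d : ℕ} (k : ℕ) (m : Fin d → ℕ) : Set (GD d) :=
  {g | ∀ l, g l ∈ dyadicInterval k (m l)}

/-- The canonical point of `Δ^{(k)}_m`. -/
def intervalPoint (k m : ℕ) : DyadicGroup :=
  fun t => if t < k ∧ m.testBit (k - 1 - t) then 1 else 0

/-- The canonical point of `Δ^{(k)}_𝐦`. -/
def cubePoint {d : ℕ} (k : ℕ) (m : Fin d → ℕ) : GD d :=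
  fun l => intervalPoint k (m l)

/-- `W^{(k)}_{n,m}`: the (constant, for `n < 2^k`) value of `W_n` on `Δ^{(k)}_m`. -/
def walshVal (k n m : ℕ) : ℝ := walsh n (intervalPoint k m)

/-- `W^{(k)}_{𝐧𝐦}`: the (constant, for `𝐧 < 2^k·𝟏`) value of `W_𝐧` on `Δ^{(k)}_𝐦`. -/
def walshValD {d : ℕ} (k : ℕ) (n m : Fin d → ℕ) : ℝ := walshD n (cubePoint k m)

/-- The box `{𝐧 : 𝐧 < 𝐍}` as a finset. -/
def boxLt {d : ℕ} (N : Fin d → ℕ) : Finset (Fin d → ℕ) :=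
  Fintype.piFinset fun l => Finset.range (N l)

/-- The box `{0,…,2^k−1}^d` as a set. -/
def box (d k : ℕ) : Set (Fin d → ℕ) := {m | ∀ l, m l < 2 ^ k}

/-- The rectangular partial sum `S_𝐍(𝐠)` of the Walsh series with coefficients `a`. -/
def walshPartialSum {d : ℕ} (a : (Fin d → ℕ) → ℂ) (N : Fin d → ℕ) (g : GD d) : ℂ :=
  ∑ n ∈ boxLt N, a n * (walshD n g : ℂ)

/-- Convergence over rectangles: `S_𝐍(𝐠) → S` as `min_j N^j → ∞`. -/
def ConvergesOverRectangles {d : ℕ} (a : (Fin d → ℕ) → ℂ) (g : GD d) (S : ℂ) : Prop :=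
  Tendsto (fun N : Fin d → ℕ => walshPartialSum a N g) atTop (𝓝 S)

/-- Convergence over cubes: `S_{N𝟏}(𝐠) → S` as `N → ∞`. -/
def ConvergesOverCubes {d : ℕ} (a : (Fin d → ℕ) → ℂ) (g : GD d) (S : ℂ) : Prop :=
  Tendsto (fun N : ℕ => walshPartialSum a (fun _ => N) g) atTop (𝓝 S)

/-- `λ`-convergence: `S_𝐍(𝐠) → S` as `min_j N^j → ∞` along `𝐍` with `max N^j/N^k ≤ λ`. -/
def LambdaConverges {d : ℕ} (lam : ℝ) (a : (Fin d → ℕ) → ℂ) (g : GD d) (S : ℂ) : Prop :=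
  ∀ ε : ℝ, 0 < ε → ∃ K : ℕ, ∀ N : Fin d → ℕ, (∀ j, K ≤ N j) →
    (∀ j k, (N j : ℝ) ≤ lam * N k) → ‖walshPartialSum a N g - S‖ < ε

/-- Auxiliary predicate for iterated summation of a multiple series with terms `f`;
the list gives the order of summation, *innermost index first*.  After summing the
series in the variables of the list, the remaining (partially summed) function is `g`. -/
def IterConvAux {d : ℕ} : List (Fin d) → ((Fin d → ℕ) → ℂ) → ((Fin d → ℕ) → ℂ) → Prop
  | [], f, g => f = g
  | j :: rest, f, g => ∃ h : (Fin d → ℕ) → ℂ,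
      (∀ n, Tendsto (fun T : ℕ => ∑ t ∈ Finset.range T, f (Function.update n j t))
        atTop (𝓝 (h n))) ∧ IterConvAux rest h g

/-- The multiple series with terms `f` converges iteratedly to `S`, the order of
summation being given by the list `l` (innermost index first): all successively
nested inner series converge and the full iterated sum equals `S`. -/
def IterConverges {d : ℕ} (l : List (Fin d)) (f : (Fin d → ℕ) → ℂ) (S : ℂ) : Prop :=
  ∃ g, IterConvAux l f g ∧ ∀ n, g n = S

/-- `A` is an M-set for the `d`-dimensional Walsh system under rectangular convergence. -/
def IsMSetRect {d : ℕ} (A : Set (GD d)) : Prop :=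
  ∃ a : (Fin d → ℕ) → ℂ, (∃ n, a n ≠ 0) ∧ ∀ g ∉ A, ConvergesOverRectangles a g 0

/-- `A` is an M-set for the `d`-dimensional Walsh system under convergence over cubes. -/
def IsMSetCubes {d : ℕ} (A : Set (GD d)) : Prop :=
  ∃ a : (Fin d → ℕ) → ℂ, (∃ n, a n ≠ 0) ∧ ∀ g ∉ A, ConvergesOverCubes a g 0

/-- `A` is an M-set under iterated convergence with summation order `l` (innermost first). -/
def IsMSetIter {d : ℕ} (A : Set (GD d)) (l : List (Fin d)) : Prop :=
  ∃ a : (Fin d → ℕ) → ℂ, (∃ n, a n ≠ 0) ∧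
    ∀ g ∉ A, IterConverges l (fun n => a n * (walshD n g : ℂ)) 0

/-- `A` is an M-set for the `d`-dimensional Walsh system under `λ`-convergence. -/
def IsMSetLambda {d : ℕ} (lam : ℝ) (A : Set (GD d)) : Prop :=
  ∃ a : (Fin d → ℕ) → ℂ, (∃ n, a n ≠ 0) ∧ ∀ g ∉ A, LambdaConverges lam a g 0

/-- A quasimeasure: a finitely additive function on dyadic cubes (indexed by rank
`k` and position `𝐦 < 2^k·𝟏`). -/
def IsQuasimeasure {d : ℕ} (τ : ℕ → (Fin d → ℕ) → ℂ) : Prop :=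
  ∀ k m, (∀ l, m l < 2 ^ k) →
    τ k m = ∑ σ : Fin d → Fin 2, τ (k + 1) fun l => 2 * m l + (σ l : ℕ)

/-- The quasimeasure generated by the Walsh series with coefficients `a`:
`τ(Δ^{(k)}_𝐦) = 2^{-kd} ∑_{𝐧<2^k𝟏} a_𝐧 W_𝐧(Δ^{(k)}_𝐦)`. -/
def genQM {d : ℕ} (a : (Fin d → ℕ) → ℂ) (k : ℕ) (m : Fin d → ℕ) : ℂ :=
  ((2 : ℂ) ^ (k * d))⁻¹ * ∑ n ∈ boxLt (fun _ : Fin d => 2 ^ k), a n * (walshValD k n m : ℂ)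

/-- The Fourier–Walsh coefficient `τ̂_𝐧` of a quasimeasure `τ`, computed at resolution `k`
(the value does not depend on `k` as long as `𝐧 < 2^k𝟏`). -/
def fourierCoeffAt {d : ℕ} (τ : ℕ → (Fin d → ℕ) → ℂ) (n : Fin d → ℕ) (k : ℕ) : ℂ :=
  ∑ m ∈ boxLt (fun _ : Fin d => 2 ^ k), (walshValD k n m : ℂ) * τ k m

/-- The local Fourier–Walsh coefficient `τ̂_𝐧(Δ^{(r)}_{𝐦Δ})`, computed at resolution `k ≥ r`. -/
def localCoeffAt {d : ℕ} (τ : ℕ → (Fin d → ℕ) → ℂ) (n : Fin d → ℕ)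
    (r : ℕ) (mΔ : Fin d → ℕ) (k : ℕ) : ℂ :=
  ∑ m ∈ (boxLt (fun _ : Fin d => 2 ^ k)).filter
      (fun m => dyadicCube k m ⊆ dyadicCube r mΔ),
    (walshValD k n m : ℂ) * τ k m

/-- The support of a quasimeasure: the complement of the union of all dyadic cubes `Δ₀`
such that `τ(Δ) = 0` for every dyadic cube `Δ ⊆ Δ₀`. -/
def qmSupport {d : ℕ} (τ : ℕ → (Fin d → ℕ) → ℂ) : Set (GD d) :=
  (⋃ k, ⋃ m ∈ box d k,
    ⋃ (_ : ∀ k' m', (∀ l, m' l < 2 ^ k') →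
        dyadicCube k' m' ⊆ dyadicCube k m → τ k' m' = 0),
    dyadicCube k m)ᶜ

/-- The restriction `τ|_{Δ̃}` of a quasimeasure to the dyadic cube `Δ̃ = Δ^{(r)}_{𝐦Δ}`:
`τ|_{Δ̃}(Δ) = τ(Δ̃ ∩ Δ)` (two dyadic cubes are nested or disjoint). -/
def restrictQM {d : ℕ} (τ : ℕ → (Fin d → ℕ) → ℂ) (r : ℕ) (mΔ : Fin d → ℕ) :
    ℕ → (Fin d → ℕ) → ℂ := fun k m =>
  if dyadicCube k m ⊆ dyadicCube (d := d) r mΔ then τ k m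
  else if dyadicCube (d := d) r mΔ ⊆ dyadicCube k m then τ r mΔ
  else 0

/-- `τ` is the canonical quasimeasure `τ_E` associated with a (nonempty closed) set `E`:
`τ(𝔾^d) = 1`; `τ(Δ) = 0` iff `Δ ∩ E = ∅`; and the mass of a cube meeting `E` is divided
equally among its `2^d` immediate subcubes that meet `E`. -/
def IsTauOf {d : ℕ} (E : Set (GD d)) (τ : ℕ → (Fin d → ℕ) → ℂ) : Prop :=
  IsQuasimeasure τ ∧
  τ 0 (fun _ => 0) = 1 ∧
  (∀ k m, (∀ l, m l < 2 ^ k) → (τ k m = 0 ↔ dyadicCube k m ∩ E = ∅)) ∧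
  (∀ k m, (∀ l, m l < 2 ^ k) → (dyadicCube k m ∩ E).Nonempty →
    ∀ σ : Fin d → Fin 2,
      τ (k + 1) (fun l => 2 * m l + (σ l : ℕ)) =
        if (dyadicCube (k + 1) (fun l => 2 * m l + (σ l : ℕ)) ∩ E).Nonempty then
          τ k m / ((Finset.univ.filter fun σ' : Fin d → Fin 2 =>
              (dyadicCube (k + 1) (fun l => 2 * m l + (σ' l : ℕ)) ∩ E).Nonempty).card : ℂ)
        else 0)

/-- The sequence `m_s`: `m_1 = 0`, `m_{s+1} = 2(2m_s+1)` (value at `0` is junk). -/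
def mSeq : ℕ → ℕ
  | 0 => 0
  | s + 1 => if s = 0 then 0 else 2 * (2 * mSeq s + 1)

/-- The layer `F_s^π`. -/
def Fspi {d : ℕ} (π : ℕ → (Fin d → ℕ) → Fin d → ℕ) (s : ℕ) : Set (GD d) :=
  ⋃ m ∈ box d (mSeq s), ⋃ m' ∈ box d (mSeq s),
    {g | g ∈ dyadicCube (2 * mSeq s) (fun l => 2 ^ mSeq s * m l + m' l) ∧
      walshD (fun _ => 2 ^ (2 * mSeq s)) g = walshValD (mSeq s) (π s m) m'}

/-- `F̃_s^π = F_1^π ∩ ⋯ ∩ F_s^π` (so `F̃_0^π = 𝔾^d`). -/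
def Ftil {d : ℕ} (π : ℕ → (Fin d → ℕ) → Fin d → ℕ) (s : ℕ) : Set (GD d) :=
  ⋂ k ∈ Finset.Icc 1 s, Fspi π k

/-- `F^π = ⋂_{s≥1} F_s^π`. -/
def Fpi {d : ℕ} (π : ℕ → (Fin d → ℕ) → Fin d → ℕ) : Set (GD d) :=
  ⋂ s ∈ Set.Ici 1, Fspi π s

/-- The identity element of `S` (yielding `F_s`, `F̃_s` and `F` themselves). -/
def idPerm (d : ℕ) : ℕ → (Fin d → ℕ) → Fin d → ℕ := fun _ m => m

/-- `S`: sequences `π = (π_s)` of permutations of the boxes `{0,…,2^{m_s}−1}^d`. -/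
structure PermSeq (d : ℕ) where
  p : ℕ → Equiv.Perm (Fin d → ℕ)
  maps : ∀ s, Set.MapsTo (p s) (box d (mSeq s)) (box d (mSeq s))

/-- The underlying sequence of functions of an element of `S`. -/
def PermSeq.f {d : ℕ} (π : PermSeq d) : ℕ → (Fin d → ℕ) → Fin d → ℕ := fun s => ⇑(π.p s)

/-- `π ∈ S'`: every `π_s` acts coordinatewise, `π_s(𝐦) = (π_s^1(m^1),…,π_s^d(m^d))`. -/
def PermSeq.Coordinatewise {d : ℕ} (π : PermSeq d) : Prop :=
  ∀ s, ∃ e : Fin d → ℕ → ℕ, ∀ m : Fin d → ℕ, π.p s m = fun l => e l (m l)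

/-- The Dirichlet kernel `D_N = ∑_{n<N} W_n` of the one-dimensional Walsh system. -/
def dirichlet (N : ℕ) (g : DyadicGroup) : ℝ :=
  ∑ n ∈ Finset.range N, walsh n g

section Statement0Aux

variable {d : ℕ}

/-- The finite box used for partial summation: coordinates in `s` range over `range B`,
the others are pinned to `n`. -/
def pbox (s : Finset (Fin d)) (B : ℕ) (n : Fin d → ℕ) : Finset (Fin d → ℕ) :=
  Fintype.piFinset fun l => if l ∈ s then Finset.range B else {n l}

lemma mem_pbox {s : Finset (Fin d)} {B : ℕ} {n m : Fin d → ℕ} :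
    m ∈ pbox s B n ↔ ∀ l, (l ∈ s → m l < B) ∧ (l ∉ s → m l = n l) := by
  simp only [pbox, Fintype.mem_piFinset]
  refine forall_congr' fun l => ?_
  split_ifs with hl <;> simp [hl]

/-- The partially summed function: variables in `s` summed out. -/
def fsumA (a : (Fin d → ℕ) → ℂ) (S : ℂ) (s : Finset (Fin d)) (n : Fin d → ℕ) : ℂ :=
  if s = Finset.univ then S else ∑ m ∈ pbox s (2 * sᶜ.sup n + 1) n, a m

lemma pbox_sum_mono (a : (Fin d → ℕ) → ℂ)
    (hA : ∀ m : Fin d → ℕ, a m ≠ 0 → ∀ l l', m l ≤ 2 * m l')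
    {s : Finset (Fin d)} {l₀ : Fin d} (hl₀ : l₀ ∉ s) {B₁ B₂ : ℕ} {n : Fin d → ℕ}
    (h1 : 2 * n l₀ < B₁) (h12 : B₁ ≤ B₂) :
    ∑ m ∈ pbox s B₁ n, a m = ∑ m ∈ pbox s B₂ n, a m := by
  apply Finset.sum_subset
  · intro m hm
    rw [mem_pbox] at *
    exact fun l => ⟨fun hl => lt_of_lt_of_le ((hm l).1 hl) h12, (hm l).2⟩
  · intro m hm₂ hm₁
    by_contra hne
    apply hm₁
    rw [mem_pbox] at *
    intro l
    refine ⟨fun hl => ?_, (hm₂ l).2⟩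
    have hml₀ : m l₀ = n l₀ := (hm₂ l₀).2 hl₀
    have := hA m hne l l₀
    omega

lemma fsumA_eq (a : (Fin d → ℕ) → ℂ) (S : ℂ)
    (hA : ∀ m : Fin d → ℕ, a m ≠ 0 → ∀ l l', m l ≤ 2 * m l')
    {s : Finset (Fin d)} (hs : s ≠ Finset.univ)
    {l₀ : Fin d} (hl₀ : l₀ ∉ s) {B : ℕ} {n : Fin d → ℕ} (hB : 2 * n l₀ < B) :
    fsumA a S s n = ∑ m ∈ pbox s B n, a m := by
  rw [fsumA, if_neg hs]
  have hsup : n l₀ ≤ sᶜ.sup n := Finset.le_sup (Finset.mem_compl.2 hl₀)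
  have h1 : 2 * n l₀ < 2 * sᶜ.sup n + 1 := by omega
  calc ∑ m ∈ pbox s (2 * sᶜ.sup n + 1) n, a m
      = ∑ m ∈ pbox s (max (2 * sᶜ.sup n + 1) B) n, a m :=
        pbox_sum_mono a hA hl₀ h1 (le_max_left _ _)
    _ = ∑ m ∈ pbox s B n, a m :=
        (pbox_sum_mono a hA hl₀ hB (le_max_right _ _)).symm

lemma sum_range_pbox (a : (Fin d → ℕ) → ℂ) {s : Finset (Fin d)} {j : Fin d} (hj : j ∉ s)
    (n : Fin d → ℕ) (T : ℕ) (B : ℕ → ℕ) :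
    ∑ t ∈ Finset.range T, ∑ m ∈ pbox s (B t) (Function.update n j t), a m
      = ∑ m ∈ (Finset.range T).biUnion (fun t => pbox s (B t) (Function.update n j t)), a m := by
  rw [Finset.sum_biUnion]
  intro t _ t' _ htt'
  refine Finset.disjoint_left.2 fun m hm hm' => ?_
  have h1 : m j = t := by
    have := (mem_pbox.1 hm j).2 hj; rwa [Function.update_self] at this
  have h2 : m j = t' := by
    have := (mem_pbox.1 hm' j).2 hj; rwa [Function.update_self] at this
  exact htt' (h1 ▸ h2 ▸ rfl)

lemma stepA (a : (Fin d → ℕ) → ℂ) (S : ℂ)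
    (hA : ∀ m : Fin d → ℕ, a m ≠ 0 → ∀ l l', m l ≤ 2 * m l')
    (hconv : Tendsto (fun N : Fin d → ℕ => ∑ n ∈ boxLt N, a n) atTop (𝓝 S))
    {s : Finset (Fin d)} (hs : s ≠ Finset.univ) {j : Fin d} (hj : j ∉ s) (n : Fin d → ℕ) :
    Tendsto (fun T : ℕ => ∑ t ∈ Finset.range T, fsumA a S s (Function.update n j t))
      atTop (𝓝 (fsumA a S (insert j s) n)) := by
  by_cases hs' : insert j s = Finset.univ
  · -- last variable: compare with rectangular sums
    have hval : fsumA a S (insert j s) n = S := by rw [fsumA, if_pos hs']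
    rw [hval]
    have hmem : ∀ l : Fin d, l ≠ j → l ∈ s := by
      intro l hlj
      have : l ∈ insert j s := hs' ▸ Finset.mem_univ l
      rcases Finset.mem_insert.1 this with h | h
      · exact absurd h hlj
      · exact h
    have key : ∀ T : ℕ, ∑ t ∈ Finset.range T, fsumA a S s (Function.update n j t)
        = ∑ m ∈ boxLt (fun l => if l = j then T else 2 * T), a m := by
      intro T
      have h1 : ∀ t ∈ Finset.range T, fsumA a S s (Function.update n j t)
          = ∑ m ∈ pbox s (2 * t + 1) (Function.update n j t), a m := by
        intro t _
        exact fsumA_eq a S hA hs hj (by rw [Function.update_self]; omega)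
      rw [Finset.sum_congr rfl h1, sum_range_pbox a hj n T (fun t => 2 * t + 1)]
      apply Finset.sum_subset
      · intro m hm
        simp only [Finset.mem_biUnion, Finset.mem_range] at hm
        obtain ⟨t, hTt, hm⟩ := hm
        rw [mem_pbox] at hm
        have hmj : m j = t := by
          have := (hm j).2 hj; rwa [Function.update_self] at this
        rw [boxLt, Fintype.mem_piFinset]
        intro l
        rw [Finset.mem_range]
        by_cases hlj : l = j
        · subst hlj; rw [if_pos rfl]; omega
        · have := (hm l).1 (hmem l hlj)
          simp only [if_neg hlj]; omega
      · intro m hmbox hmU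
        by_contra hne
        apply hmU
        rw [boxLt, Fintype.mem_piFinset] at hmbox
        have hmj : m j < T := by
          have := hmbox j; rwa [if_pos rfl, Finset.mem_range] at this
        simp only [Finset.mem_biUnion, Finset.mem_range]
        refine ⟨m j, hmj, ?_⟩
        rw [mem_pbox]
        intro l
        constructor
        · intro _
          have := hA m hne l j
          omega
        · intro hls
          have hlj : l = j := by
            by_contra hlj
            exact hls (hmem l hlj)
          subst hlj; rw [Function.update_self]
    have hfun : (fun T : ℕ => ∑ t ∈ Finset.range T, fsumA a S s (Function.update n j t))
        = fun T : ℕ => ∑ m ∈ boxLt (fun l => if l = j then T else 2 * T), a m := funext key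
    rw [hfun]
    have hN : Tendsto (fun T : ℕ => (fun l : Fin d => if l = j then T else 2 * T))
        atTop atTop := by
      rw [Filter.tendsto_atTop_atTop]
      intro b
      refine ⟨Finset.univ.sup b, fun T hT l => ?_⟩
      have hb : b l ≤ Finset.univ.sup b := Finset.le_sup (Finset.mem_univ l)
      show b l ≤ if l = j then T else 2 * T
      split_ifs <;> omega
    exact hconv.comp hN
  · -- not the last variable: eventually constant
    obtain ⟨l₀, hl₀⟩ : ∃ l₀, l₀ ∉ insert j s := by
      by_contra h
      push_neg at h
      exact hs' (Finset.eq_univ_iff_forall.2 h)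
    have hl₀s : l₀ ∉ s := fun h => hl₀ (Finset.mem_insert_of_mem h)
    have hl₀j : l₀ ≠ j := fun h => hl₀ (h ▸ Finset.mem_insert_self j s)
    have key : ∀ T, 2 * n l₀ + 1 ≤ T →
        ∑ t ∈ Finset.range T, fsumA a S s (Function.update n j t)
          = fsumA a S (insert j s) n := by
      intro T hT
      set C := 2 * sᶜ.sup n + 2 * T + 1 with hC
      have h1 : ∀ t ∈ Finset.range T, fsumA a S s (Function.update n j t)
          = ∑ m ∈ pbox s C (Function.update n j t), a m := by
        intro t ht
        have htT := Finset.mem_range.1 ht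
        exact fsumA_eq a S hA hs hj (by rw [Function.update_self]; omega)
      rw [Finset.sum_congr rfl h1, sum_range_pbox a hj n T (fun _ => C)]
      have h3 : ∑ m ∈ (Finset.range T).biUnion
            (fun t => pbox s C (Function.update n j t)), a m
          = ∑ m ∈ pbox (insert j s) C n, a m := by
        apply Finset.sum_subset
        · intro m hm
          simp only [Finset.mem_biUnion, Finset.mem_range] at hm
          obtain ⟨t, hTt, hm⟩ := hm
          rw [mem_pbox] at hm
          have hmj : m j = t := by
            have := (hm j).2 hj; rwa [Function.update_self] at this
          rw [mem_pbox]
          intro l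
          constructor
          · intro hl
            rcases Finset.mem_insert.1 hl with rfl | hl
            · omega
            · exact lt_of_lt_of_le ((hm l).1 hl) (by omega)
          · intro hl
            have hlj : l ≠ j := fun h => hl (h ▸ Finset.mem_insert_self j s)
            have hls : l ∉ s := fun h => hl (Finset.mem_insert_of_mem h)
            have := (hm l).2 hls
            rwa [Function.update_of_ne hlj] at this
        · intro m hm hmU
          by_contra hne
          apply hmU
          rw [mem_pbox] at hm
          have hml₀ : m l₀ = n l₀ := (hm l₀).2 hl₀
          have hmj : m j ≤ 2 * n l₀ := by
            have := hA m hne j l₀; omega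
          simp only [Finset.mem_biUnion, Finset.mem_range]
          refine ⟨m j, by omega, ?_⟩
          rw [mem_pbox]
          intro l
          constructor
          · intro hl
            exact (hm l).1 (Finset.mem_insert_of_mem hl)
          · intro hls
            by_cases hlj : l = j
            · subst hlj; rw [Function.update_self]
            · rw [Function.update_of_ne hlj]
              exact (hm l).2 (fun h => (Finset.mem_insert.1 h).elim hlj hls)
      rw [h3]
      exact (fsumA_eq a S hA hs' hl₀ (B := C) (by omega)).symm
    refine Tendsto.congr' ?_ tendsto_const_nhds
    exact Filter.eventually_atTop.2 ⟨2 * n l₀ + 1, fun T hT => (key T hT).symm⟩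

lemma iterA (a : (Fin d → ℕ) → ℂ) (S : ℂ)
    (hA : ∀ m : Fin d → ℕ, a m ≠ 0 → ∀ l l', m l ≤ 2 * m l')
    (hconv : Tendsto (fun N : Fin d → ℕ => ∑ n ∈ boxLt N, a n) atTop (𝓝 S)) :
    ∀ (rest : List (Fin d)) (s : Finset (Fin d)), rest.Nodup →
      (∀ k, k ∈ s ↔ k ∉ rest) → IterConvAux rest (fsumA a S s) (fun _ => S)
  | [], s, _, hs => by
      have hu : s = Finset.univ :=
        Finset.eq_univ_iff_forall.2 fun k => (hs k).2 List.not_mem_nil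
      show fsumA a S s = fun _ => S
      funext n
      rw [fsumA, if_pos hu]
  | j :: tail, s, hnd, hs => by
      have hj : j ∉ s := fun h => (hs j).1 h List.mem_cons_self
      have hsu : s ≠ Finset.univ := fun h => hj (h ▸ Finset.mem_univ j)
      refine ⟨fsumA a S (insert j s), fun n => stepA a S hA hconv hsu hj n, ?_⟩
      apply iterA a S hA hconv tail (insert j s) (List.nodup_cons.1 hnd).2
      intro k
      rw [Finset.mem_insert, hs k]
      constructor
      · rintro (rfl | hk)
        · exact (List.nodup_cons.1 hnd).1
        · exact fun hkt => hk (List.mem_cons_of_mem j hkt)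
      · intro hkt
        by_cases hkj : k = j
        · exact Or.inl hkj
        · exact Or.inr fun hm => (List.mem_cons.1 hm).elim hkj hkt

end Statement0Aux

/-- If all nonzero terms of a `d`-multiple numerical series have indices in
`{𝟎} ∪ ⋃_k B_k` and the series converges over rectangles to `S`, then it converges to `S`
iteratedly in every order of iterated summation; in particular each inner series has only
finitely many nonzero terms. -/
theorem statement0 (d : ℕ) (hd : 2 ≤ d) (a : (Fin d → ℕ) → ℂ) (S : ℂ)
    (hsupp : ∀ n : Fin d → ℕ, a n ≠ 0 →
      n = (fun _ => 0) ∨ ∃ k : ℕ, ∀ l, 2 ^ k ≤ n l ∧ n l < 2 ^ (k + 1))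
    (hconv : Tendsto (fun N : Fin d → ℕ => ∑ n ∈ boxLt N, a n) atTop (𝓝 S)) :
    (∀ (j : Fin d) (n : Fin d → ℕ), {t : ℕ | a (Function.update n j t) ≠ 0}.Finite) ∧
    (∀ l : List (Fin d), l.Nodup → (∀ j, j ∈ l) → IterConverges l a S) := by
  have hA : ∀ m : Fin d → ℕ, a m ≠ 0 → ∀ l l', m l ≤ 2 * m l' := by
    intro m hm l l'
    rcases hsupp m hm with h0 | ⟨k, hk⟩
    · have h1 : m l = 0 := congrFun h0 l
      omega
    · have h1 := (hk l).2
      have h2 := (hk l').1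
      have h3 : (2:ℕ) ^ (k+1) = 2 * 2 ^ k := by ring
      omega
  constructor
  · intro j n
    obtain ⟨l₀, hl₀⟩ : ∃ l₀ : Fin d, l₀ ≠ j := by
      by_cases h : (⟨0, by omega⟩ : Fin d) = j
      · exact ⟨⟨1, by omega⟩, fun h' => by rw [← h] at h'; simp at h'⟩
      · exact ⟨⟨0, by omega⟩, h⟩
    apply Set.Finite.subset (Set.finite_Icc 0 (2 * n l₀))
    intro t ht
    simp only [Set.mem_setOf_eq] at ht
    have := hA _ ht j l₀
    rw [Function.update_self, Function.update_of_ne hl₀] at this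
    simp only [Set.mem_Icc]
    omega
  · intro l hnd hcov
    refine ⟨fun _ => S, ?_, fun n => rfl⟩
    have h0 : (∅ : Finset (Fin d)) ≠ Finset.univ := by
      intro h
      have : (⟨0, by omega⟩ : Fin d) ∈ (∅ : Finset (Fin d)) := h ▸ Finset.mem_univ _
      simp at this
    have hfa : fsumA a S ∅ = a := by
      funext n
      rw [fsumA, if_neg h0]
      have hpb : pbox (∅ : Finset (Fin d)) (2 * (∅ᶜ : Finset (Fin d)).sup n + 1) n = {n} := by
        ext m
        rw [mem_pbox, Finset.mem_singleton]
        constructor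
        · intro h
          funext l
          exact (h l).2 (Finset.notMem_empty l)
        · rintro rfl l
          exact ⟨fun h => absurd h (Finset.notMem_empty l), fun _ => rfl⟩
      rw [hpb, Finset.sum_singleton]
    have hmain := iterA a S hA hconv l ∅ hnd (fun k => by simp [hcov k])
    rwa [hfa] at hmain
end
end

section
/- Let (a_𝐧)_{𝐧∈ℕ₀^d} be the coefficients of a d-multiple Walsh series and let τ be the quasimeasure generated by this series. Let w ∈ ℕ₀ and let Δ* be a dyadic cube of rank w such that τ(Δ) = 0 for every dyadic cube Δ ⊆ Δ*. Then the rectangular partial sums satisfy S_{2^w𝐌}(𝐠) = 0 for every 𝐠 ∈ Δ* and every 𝐌 ∈ ℕ^d, where 2^w𝐌 = (2^w M^1,…,2^w M^d). -/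
open Filter Finset Topology MeasureTheory
open scoped Classical

noncomputable section

section Statement4Aux

lemma testBit_false_of_le {n t : ℕ} (h : n ≤ t) : n.testBit t = false :=
  Nat.testBit_eq_false_of_lt
    (lt_of_lt_of_le (n.lt_two_pow_self) (Nat.pow_le_pow_right (by norm_num) h))

lemma walsh_eq_gen (n K : ℕ) (hK : ∀ t, K ≤ t → n.testBit t = false) (g : DyadicGroup) :
    walsh n g = ∏ t ∈ Finset.range K, if n.testBit t ∧ g t = 1 then (-1 : ℝ) else 1 := by
  unfold walsh
  rcases le_total n K with h | h
  · apply Finset.prod_subset (Finset.range_subset_range.2 h)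
    intro t ht hnt
    have hb : n.testBit t = false :=
      testBit_false_of_le (le_of_not_gt (fun hlt => hnt (Finset.mem_range.2 hlt)))
    simp [hb]
  · refine (Finset.prod_subset (Finset.range_subset_range.2 h) ?_).symm
    intro t ht hnt
    have hb : n.testBit t = false :=
      hK t (le_of_not_gt (fun hlt => hnt (Finset.mem_range.2 hlt)))
    simp [hb]

lemma walsh_eq_of_le (n K : ℕ) (h : n ≤ K) (g : DyadicGroup) :
    walsh n g = ∏ t ∈ Finset.range K, if n.testBit t ∧ g t = 1 then (-1 : ℝ) else 1 :=
  walsh_eq_gen n K (fun t ht => testBit_false_of_le (le_trans h ht)) g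

lemma walsh_eq_of_lt_pow (n K : ℕ) (h : n < 2 ^ K) (g : DyadicGroup) :
    walsh n g = ∏ t ∈ Finset.range K, if n.testBit t ∧ g t = 1 then (-1 : ℝ) else 1 :=
  walsh_eq_gen n K (fun t ht => Nat.testBit_eq_false_of_lt
    (lt_of_lt_of_le h (Nat.pow_le_pow_right (by norm_num) ht))) g

lemma zmod2_cases : ∀ u : ZMod 2, u = 0 ∨ u = 1 := by decide

lemma sum_range_split {M : Type*} [AddCommMonoid M] (f : ℕ → M) (A B : ℕ) :
    ∑ i ∈ Finset.range (A + B), f i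
      = ∑ i ∈ Finset.range A, f i + ∑ i ∈ Finset.range B, f (A + i) := by
  rw [Finset.range_eq_Ico,
    ← Finset.sum_Ico_consecutive f (Nat.zero_le A) (Nat.le_add_right A B),
    ← Finset.range_eq_Ico, Finset.sum_Ico_eq_sum_range]
  simp

lemma walsh_mul (n : ℕ) (x y : DyadicGroup) :
    walsh n x * walsh n y = walsh n (x + y) := by
  unfold walsh
  rw [← Finset.prod_mul_distrib]
  refine Finset.prod_congr rfl fun t _ => ?_
  by_cases hb : n.testBit t
  · have hxy : (x + y) t = x t + y t := rfl
    simp only [hb, true_and, hxy]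
    rcases zmod2_cases (x t) with hu | hu <;> rcases zmod2_cases (y t) with hv | hv <;>
      rw [hu, hv] <;>
      simp only [show ((0 : ZMod 2) = 1) ↔ False from by decide,
        show ((0 : ZMod 2) + 0 = 1) ↔ False from by decide,
        show ((0 : ZMod 2) + 1 = 1) ↔ True from by decide,
        show ((1 : ZMod 2) + 0 = 1) ↔ True from by decide,
        show ((1 : ZMod 2) + 1 = 1) ↔ False from by decide,
        if_true, if_false, iff_false, iff_true] <;> norm_num
  · simp [hb]

lemma testBit_two_pow_mul (w q t : ℕ) :
    (2 ^ w * q).testBit t = (decide (t ≥ w) && q.testBit (t - w)) :=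
  Nat.testBit_two_pow_mul

lemma walsh_block {r w : ℕ} (q : ℕ) (hr : r < 2 ^ w) (g : DyadicGroup) :
    walsh (2 ^ w * q + r) g = walsh (2 ^ w * q) g * walsh r g := by
  set K := 2 ^ w * q + r with hk
  rw [walsh_eq_of_le _ K le_rfl, walsh_eq_of_le (2 ^ w * q) K (Nat.le_add_right _ _),
    walsh_eq_of_le r K (Nat.le_add_left _ _), ← Finset.prod_mul_distrib]
  refine Finset.prod_congr rfl fun t _ => ?_
  rw [Nat.testBit_two_pow_mul_add q hr t, testBit_two_pow_mul]
  by_cases htw : t < w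
  · have : ¬ (t ≥ w) := by omega
    simp [htw, this]
  · have hge : t ≥ w := by omega
    have hrb : r.testBit t = false :=
      Nat.testBit_eq_false_of_lt (lt_of_lt_of_le hr (Nat.pow_le_pow_right (by norm_num) hge))
    simp [htw, hge, hrb]

lemma walsh_two_pow (w : ℕ) (z : DyadicGroup) :
    walsh (2 ^ w) z = if z w = 1 then (-1 : ℝ) else 1 := by
  rw [walsh_eq_of_lt_pow (2 ^ w) (w + 1)
    (Nat.pow_lt_pow_right (by norm_num) (Nat.lt_succ_self w)) z]
  rw [Finset.prod_eq_single_of_mem w (Finset.mem_range.2 (Nat.lt_succ_self w))]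
  · simp [Nat.testBit_two_pow]
  · intro t _ hts
    simp [Nat.testBit_two_pow_of_ne (Ne.symm hts)]

lemma dirichlet_prod (w : ℕ) (z : DyadicGroup) :
    ∑ r ∈ Finset.range (2 ^ w), walsh r z
      = ∏ t ∈ Finset.range w, (1 + if z t = 1 then (-1 : ℝ) else 1) := by
  induction w with
  | zero => simp [walsh]
  | succ w ih =>
    have h2 : (2 : ℕ) ^ (w + 1) = 2 ^ w + 2 ^ w := by ring
    rw [h2, sum_range_split]
    have hshift : ∀ i ∈ Finset.range (2 ^ w),
        walsh (2 ^ w + i) z = (if z w = 1 then (-1 : ℝ) else 1) * walsh i z := by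
      intro i hi
      have : (2 : ℕ) ^ w + i = 2 ^ w * 1 + i := by ring
      rw [this, walsh_block 1 (Finset.mem_range.1 hi), mul_one, walsh_two_pow]
    rw [Finset.sum_congr rfl hshift, ← Finset.mul_sum, ih, Finset.prod_range_succ]
    ring

lemma sum_block (w M : ℕ) (z : DyadicGroup) :
    ∑ n ∈ Finset.range (2 ^ w * M), walsh n z
      = (∑ q ∈ Finset.range M, walsh (2 ^ w * q) z) * ∑ r ∈ Finset.range (2 ^ w), walsh r z := by
  induction M with
  | zero => simp
  | succ M ih =>
    have h2 : 2 ^ w * (M + 1) = 2 ^ w * M + 2 ^ w := by ring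
    rw [h2, sum_range_split]
    have hshift : ∀ i ∈ Finset.range (2 ^ w),
        walsh (2 ^ w * M + i) z = walsh (2 ^ w * M) z * walsh i z := by
      intro i hi
      exact walsh_block M (Finset.mem_range.1 hi) z
    rw [Finset.sum_congr rfl hshift, ← Finset.mul_sum, ih, Finset.sum_range_succ]
    ring

lemma key1d (w M : ℕ) (x y : DyadicGroup) (t0 : ℕ) (ht0 : t0 < w) (hne : x t0 ≠ y t0) :
    ∑ n ∈ Finset.range (2 ^ w * M), walsh n x * walsh n y = 0 := by
  have hmul : ∀ n, walsh n x * walsh n y = walsh n (x + y) := fun n => walsh_mul n x y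
  simp only [hmul]
  rw [sum_block, dirichlet_prod]
  have hz : (x + y) t0 = 1 := by
    have : (x + y) t0 = x t0 + y t0 := rfl
    rw [this]
    rcases zmod2_cases (x t0) with hu | hu <;> rcases zmod2_cases (y t0) with hv | hv <;>
      rw [hu, hv] <;> first | rfl | (exfalso; exact hne (hu.trans hv.symm)) | decide
  have hprod : ∏ t ∈ Finset.range w, (1 + if (x + y) t = 1 then (-1 : ℝ) else 1) = 0 :=
    Finset.prod_eq_zero (Finset.mem_range.2 ht0) (by rw [hz]; norm_num)
  rw [hprod, mul_zero]

lemma sum_points (k ν : ℕ) (hν : ν < 2 ^ k) :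
    ∑ m ∈ Finset.range (2 ^ k), walsh ν (intervalPoint k m)
      = if ν = 0 then (2 ^ k : ℝ) else 0 := by
  set y : DyadicGroup := fun s => if ν.testBit (k - 1 - s) then (1 : ZMod 2) else 0 with hy
  have step : ∀ m ∈ Finset.range (2 ^ k), walsh ν (intervalPoint k m) = walsh m y := by
    intro m hm
    rw [walsh_eq_of_lt_pow ν k hν, walsh_eq_of_lt_pow m k (Finset.mem_range.1 hm)]
    rw [← Finset.prod_range_reflect (fun t =>
      if ν.testBit t ∧ intervalPoint k m t = 1 then (-1 : ℝ) else 1) k]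
    refine Finset.prod_congr rfl fun s hs => ?_
    have hsk : s < k := Finset.mem_range.1 hs
    have h1 : k - 1 - s < k := by omega
    have h2 : k - 1 - (k - 1 - s) = s := by omega
    simp only [intervalPoint, hy, h1, h2, true_and]
    by_cases ha : ν.testBit (k - 1 - s) <;> by_cases hb : m.testBit s <;>
      simp [ha, hb]
  rw [Finset.sum_congr rfl step, dirichlet_prod k y]
  by_cases hν0 : ν = 0
  · have : ∀ t ∈ Finset.range k, (1 + if y t = 1 then (-1 : ℝ) else 1) = 2 := by
      intro t _
      norm_num [hy, hν0, Nat.zero_testBit]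
    rw [Finset.prod_congr rfl this, if_pos hν0, Finset.prod_const, Finset.card_range]
  · rw [if_neg hν0]
    obtain ⟨i, hi⟩ : ∃ i, ν.testBit i = true := by
      by_contra h
      push_neg at h
      exact hν0 (Nat.eq_of_testBit_eq fun i => by
        simp [Bool.eq_false_iff.2 (h i), Nat.zero_testBit])
    have hik : i < k := by
      by_contra hik
      have := Nat.testBit_eq_false_of_lt
        (lt_of_lt_of_le hν (Nat.pow_le_pow_right (by norm_num) (le_of_not_gt hik)))
      rw [hi] at this; exact Bool.noConfusion this
    refine Finset.prod_eq_zero (Finset.mem_range.2 (show k - 1 - i < k by omega)) ?_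
    have : y (k - 1 - i) = 1 := by
      have h3 : k - 1 - (k - 1 - i) = i := by omega
      simp [hy, h3, hi]
    rw [this]
    norm_num

lemma walsh_mul_same (n n' K : ℕ) (hn : n < 2 ^ K) (hn' : n' < 2 ^ K) (x : DyadicGroup) :
    walsh n x * walsh n' x = walsh (n ^^^ n') x := by
  rw [walsh_eq_of_lt_pow n K hn, walsh_eq_of_lt_pow n' K hn',
    walsh_eq_of_lt_pow _ K (Nat.xor_lt_two_pow hn hn'), ← Finset.prod_mul_distrib]
  refine Finset.prod_congr rfl fun t _ => ?_
  rw [Nat.testBit_xor]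
  by_cases ha : n.testBit t <;> by_cases hb : n'.testBit t <;> by_cases hz : x t = 1 <;>
    simp [ha, hb, hz]

lemma orth (k n n' : ℕ) (hn : n < 2 ^ k) (hn' : n' < 2 ^ k) :
    ∑ m ∈ Finset.range (2 ^ k), walshVal k n m * walshVal k n' m
      = if n = n' then (2 ^ k : ℝ) else 0 := by
  unfold walshVal
  have : ∀ m, walsh n (intervalPoint k m) * walsh n' (intervalPoint k m)
      = walsh (n ^^^ n') (intervalPoint k m) := fun m => walsh_mul_same n n' k hn hn' _
  simp only [this]
  rw [sum_points k _ (Nat.xor_lt_two_pow hn hn')]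
  simp [xor_eq_zero_iff]

lemma mem_boxLt {d : ℕ} {N n : Fin d → ℕ} : n ∈ boxLt N ↔ ∀ l, n l < N l := by
  simp [boxLt, Fintype.mem_piFinset]

set_option maxHeartbeats 1000000 in
lemma orthD {d : ℕ} (k : ℕ) (n n' : Fin d → ℕ) (hn : ∀ l, n l < 2 ^ k)
    (hn' : ∀ l, n' l < 2 ^ k) :
    ∑ m ∈ boxLt (fun _ : Fin d => 2 ^ k), walshValD k n m * walshValD k n' m
      = if n = n' then ((2 : ℝ) ^ k) ^ d else 0 := by
  calc ∑ m ∈ boxLt (fun _ : Fin d => 2 ^ k), walshValD k n m * walshValD k n' m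
      = ∑ m ∈ Fintype.piFinset (fun _ : Fin d => Finset.range (2 ^ k)),
          ∏ l, (walshVal k (n l) (m l) * walshVal k (n' l) (m l)) := by
        refine Finset.sum_congr rfl fun m _ => ?_
        simp [walshValD, walshD, cubePoint, walshVal, Finset.prod_mul_distrib]
    _ = ∏ l, ∑ x ∈ Finset.range (2 ^ k), walshVal k (n l) x * walshVal k (n' l) x := by
        exact (Finset.prod_univ_sum (fun _ : Fin d => Finset.range (2 ^ k))
          (fun l x => walshVal k (n l) x * walshVal k (n' l) x)).symm
    _ = ∏ l : Fin d, if n l = n' l then (2 ^ k : ℝ) else 0 :=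
        Finset.prod_congr rfl fun l _ => orth k (n l) (n' l) (hn l) (hn' l)
    _ = if n = n' then ((2 : ℝ) ^ k) ^ d else 0 := by
        by_cases h : n = n'
        · subst h
          simp [Finset.prod_const]
        · obtain ⟨l, hl⟩ : ∃ l, n l ≠ n' l := by
            by_contra hc; push_neg at hc; exact h (funext hc)
          rw [if_neg h]
          exact Finset.prod_eq_zero (Finset.mem_univ l) (if_neg hl)

lemma inversion {d : ℕ} (a : (Fin d → ℕ) → ℂ) (k : ℕ) (n : Fin d → ℕ)
    (hn : ∀ l, n l < 2 ^ k) :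
    ∑ m ∈ boxLt (fun _ : Fin d => 2 ^ k), (walshValD k n m : ℂ) * genQM a k m = a n := by
  classical
  set B := boxLt (fun _ : Fin d => 2 ^ k) with hB
  have castkey : ∀ n' ∈ B,
      ∑ m ∈ B, (walshValD k n m : ℂ) * (walshValD k n' m : ℂ)
        = if n = n' then ((2 : ℂ) ^ (k * d)) else 0 := by
    intro n' hn'
    have hn'k : ∀ l, n' l < 2 ^ k := mem_boxLt.1 hn'
    have hreal := orthD k n n' hn hn'k
    calc ∑ m ∈ B, (walshValD k n m : ℂ) * (walshValD k n' m : ℂ)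
        = ((∑ m ∈ B, walshValD k n m * walshValD k n' m : ℝ) : ℂ) := by push_cast; rfl
      _ = _ := by
          rw [hreal]
          split_ifs
          · push_cast
            rw [← pow_mul]
          · simp
  have swap : ∑ m ∈ B, (walshValD k n m : ℂ) * genQM a k m
      = ∑ n' ∈ B, ((2 : ℂ) ^ (k * d))⁻¹ * a n'
          * ∑ m ∈ B, (walshValD k n m : ℂ) * (walshValD k n' m : ℂ) := by
    unfold genQM
    simp_rw [Finset.mul_sum]
    rw [Finset.sum_comm]
    refine Finset.sum_congr rfl fun n' _ => Finset.sum_congr rfl fun m _ => by ring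
  rw [swap, Finset.sum_congr rfl (fun n' hn' => by rw [castkey n' hn'])]
  have hnB : n ∈ B := mem_boxLt.2 hn
  rw [Finset.sum_eq_single_of_mem n hnB]
  · rw [if_pos rfl]
    have h2 : ((2 : ℂ) ^ (k * d)) ≠ 0 := pow_ne_zero _ two_ne_zero
    field_simp
  · intro n' _ hne
    rw [if_neg (Ne.symm hne), mul_zero]

end Statement4Aux

/-- if the quasimeasure `τ` generated by a Walsh series vanishes on every
dyadic subcube of a dyadic cube `Δ*` of rank `w`, then `S_{2^w𝐌}(𝐠) = 0` for every
`𝐠 ∈ Δ*` and every `𝐌 ∈ ℕ^d`. -/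
theorem statement4 (d : ℕ) (hd : 2 ≤ d) (a : (Fin d → ℕ) → ℂ)
    (w : ℕ) (mΔ : Fin d → ℕ) (hmΔ : ∀ l, mΔ l < 2 ^ w)
    (h0 : ∀ (k : ℕ) (m : Fin d → ℕ), (∀ l, m l < 2 ^ k) →
      dyadicCube k m ⊆ dyadicCube w mΔ → genQM a k m = 0) :
    ∀ g ∈ dyadicCube w mΔ, ∀ M : Fin d → ℕ, (∀ l, 1 ≤ M l) →
      walshPartialSum a (fun l => 2 ^ w * M l) g = 0 := by
  intro g hg M hM
  classical
  unfold walshPartialSum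
  set K := Finset.univ.sup M with hKdef
  set k := w + K with hkdef
  have hwk : w ≤ k := Nat.le_add_right _ _
  set N : Fin d → ℕ := fun l => 2 ^ w * M l with hN
  have hNk : ∀ l, N l ≤ 2 ^ k := by
    intro l
    have h1 : M l ≤ 2 ^ K :=
      le_trans (Nat.le_of_lt ((M l).lt_two_pow_self))
        (Nat.pow_le_pow_right (by norm_num) (Finset.le_sup (Finset.mem_univ l)))
    calc 2 ^ w * M l ≤ 2 ^ w * 2 ^ K := Nat.mul_le_mul_left _ h1
      _ = 2 ^ k := by rw [hkdef, pow_add]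
  set B := boxLt (fun _ : Fin d => 2 ^ k) with hB
  have repl : ∀ n ∈ boxLt N,
      a n = ∑ m ∈ B, (walshValD k n m : ℂ) * genQM a k m :=
    fun n hn => (inversion a k n (fun l => lt_of_lt_of_le (mem_boxLt.1 hn l) (hNk l))).symm
  have e1 : ∑ n ∈ boxLt N, a n * (walshD n g : ℂ)
      = ∑ n ∈ boxLt N, (∑ m ∈ B, (walshValD k n m : ℂ) * genQM a k m) * (walshD n g : ℂ) :=
    Finset.sum_congr rfl fun n hn => by rw [repl n hn]
  rw [e1]
  simp_rw [Finset.sum_mul]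
  rw [Finset.sum_comm]
  apply Finset.sum_eq_zero
  intro m hm
  by_cases hc : ∀ l, ∀ t < w, intervalPoint k (m l) t = g l t
  · -- the cube is contained in Δ*, so its quasimeasure vanishes
    have hsub : dyadicCube k m ⊆ dyadicCube w mΔ := by
      intro h hh
      intro l t htw
      have htk : t < k := lt_of_lt_of_le htw hwk
      have h1 : h l t = intervalPoint k (m l) t := by
        rw [hh l t htk]
        simp [intervalPoint, htk]
      rw [h1, hc l t htw]
      exact hg l t htw
    have hτ : genQM a k m = 0 := h0 k m (mem_boxLt.1 hm) hsub
    apply Finset.sum_eq_zero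
    intro n _
    rw [hτ]
    ring
  · push_neg at hc
    obtain ⟨l0, t0, ht0, hne⟩ := hc
    have hfac : (∑ n ∈ boxLt N, walshValD k n m * walshD n g : ℝ) = 0 := by
      have hprod : (∑ n ∈ boxLt N, walshValD k n m * walshD n g : ℝ)
          = ∏ l, ∑ x ∈ Finset.range (N l), walsh x (intervalPoint k (m l)) * walsh x (g l) := by
        refine Eq.trans ?_ (Finset.prod_univ_sum (fun l => Finset.range (N l))
          (fun l x => walsh x (intervalPoint k (m l)) * walsh x (g l))).symm
        refine Finset.sum_congr rfl fun n _ => ?_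
        simp [walshValD, walshD, cubePoint, walshVal, Finset.prod_mul_distrib]
      rw [hprod]
      refine Finset.prod_eq_zero (Finset.mem_univ l0) ?_
      exact key1d w (M l0) _ _ t0 ht0 hne
    have e2 : ∑ n ∈ boxLt N, (walshValD k n m : ℂ) * genQM a k m * (walshD n g : ℂ)
        = genQM a k m * ((∑ n ∈ boxLt N, walshValD k n m * walshD n g : ℝ) : ℂ) := by
      push_cast
      rw [Finset.mul_sum]
      exact Finset.sum_congr rfl fun n _ => by ring
    rw [e2, hfac]
    simp
end
end

section
/- Let π ∈ S and τ^π = τ_{F^π} (in particular, when every π_s is the identity, τ^π = τ_F). Then (τ^π)̂_𝟎 = 1, and (τ^π)̂_𝐧 = 0 for every 𝐧 ∈ ℕ₀^d ∖ {𝟎} that does not belong to any block B_{2m_s}, s ≥ 1. -/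
open Filter Finset Topology MeasureTheory
open scoped Classical

noncomputable section

namespace S11

/-! ### Basic dyadic machinery -/

/-- The index of the rank-`k` dyadic interval containing `g`. -/
def prefixIdx : ℕ → DyadicGroup → ℕ
  | 0, _ => 0
  | t + 1, g => 2 * prefixIdx t g + (if g t = 1 then 1 else 0)

lemma zmod2_cases (a : ZMod 2) : a = 0 ∨ a = 1 := by revert a; decide

lemma prefixIdx_lt (k : ℕ) (g : DyadicGroup) : prefixIdx k g < 2 ^ k := by
  induction k with
  | zero => simp [prefixIdx]
  | succ k ih => simp only [prefixIdx, pow_succ]; split <;> omega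

lemma prefixIdx_congr {k : ℕ} {g g' : DyadicGroup} (h : ∀ t < k, g t = g' t) :
    prefixIdx k g = prefixIdx k g' := by
  induction k with
  | zero => rfl
  | succ k ih =>
      simp only [prefixIdx]
      rw [ih fun t ht => h t (by omega), h k (by omega)]

lemma testBit_prefixIdx {k : ℕ} (g : DyadicGroup) {j : ℕ} (hj : j < k) :
    (prefixIdx k g).testBit j = decide (g (k - 1 - j) = 1) := by
  induction k generalizing j with
  | zero => omega
  | succ k ih =>
      rcases Nat.eq_zero_or_pos j with rfl | hj0
      · have hmod : (prefixIdx (k + 1) g) % 2 = (if g k = 1 then 1 else 0) := by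
          simp only [prefixIdx]; split <;> omega
        rw [Nat.testBit_zero, hmod]
        simp only [Nat.add_sub_cancel, Nat.sub_zero]
        by_cases h : g k = 1 <;> simp [h]
      · obtain ⟨j, rfl⟩ := Nat.exists_eq_succ_of_ne_zero (by omega : j ≠ 0)
        have h2 : (prefixIdx (k + 1) g) / 2 = prefixIdx k g := by
          simp only [prefixIdx]; split <;> omega
        rw [Nat.testBit_succ, h2, ih (by omega),
          show k + 1 - 1 - (j + 1) = k - 1 - j from by omega]

lemma self_mem_dyadicInterval (k : ℕ) (g : DyadicGroup) :
    g ∈ dyadicInterval k (prefixIdx k g) := by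
  intro t ht
  rw [testBit_prefixIdx g (by omega : k - 1 - t < k)]
  rw [(by omega : k - 1 - (k - 1 - t) = t)]
  rcases zmod2_cases (g t) with h | h <;> simp [h]

lemma prefixIdx_eq_of_mem {k m : ℕ} {g : DyadicGroup} (hm : m < 2 ^ k)
    (hg : g ∈ dyadicInterval k m) : prefixIdx k g = m := by
  apply Nat.eq_of_testBit_eq
  intro j
  by_cases hj : j < k
  · rw [testBit_prefixIdx g hj]
    have hgt := hg (k - 1 - j) (by omega)
    rw [(by omega : k - 1 - (k - 1 - j) = j)] at hgt
    rcases hb : m.testBit j <;> rw [hb] at hgt <;> simp at hgt <;> simp [hgt]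
  · rw [Nat.testBit_lt_two_pow
        (lt_of_lt_of_le (prefixIdx_lt k g) (Nat.pow_le_pow_right (by norm_num) (by omega))),
      Nat.testBit_lt_two_pow
        (lt_of_lt_of_le hm (Nat.pow_le_pow_right (by norm_num) (by omega)))]

lemma mem_dyadicInterval_iff {k m : ℕ} (hm : m < 2 ^ k) (g : DyadicGroup) :
    g ∈ dyadicInterval k m ↔ prefixIdx k g = m :=
  ⟨prefixIdx_eq_of_mem hm, fun h => h ▸ self_mem_dyadicInterval k g⟩

/-! ### Walsh function lemmas -/

lemma walsh_extend {n : ℕ} (g : DyadicGroup) {M N : ℕ} (hNM : N ≤ M) (h : n < 2 ^ N) :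
    (∏ j ∈ Finset.range M, if n.testBit j ∧ g j = 1 then (-1 : ℝ) else 1)
      = ∏ j ∈ Finset.range N, if n.testBit j ∧ g j = 1 then (-1 : ℝ) else 1 := by
  refine (Finset.prod_subset (Finset.range_subset_range.2 hNM) ?_).symm
  intro j hjM hjN
  simp only [Finset.mem_range, not_lt] at hjN
  have hb : n.testBit j = false :=
    Nat.testBit_lt_two_pow (lt_of_lt_of_le h (Nat.pow_le_pow_right (by norm_num) hjN))
  simp [hb]

lemma walsh_eq_prod {n N : ℕ} (h : n < 2 ^ N) (g : DyadicGroup) :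
    walsh n g = ∏ j ∈ Finset.range N, if n.testBit j ∧ g j = 1 then (-1 : ℝ) else 1 := by
  have h1 : n < 2 ^ n := Nat.lt_two_pow_self (n := n)
  rw [walsh, ← walsh_extend g (le_max_left n N) h1, walsh_extend g (le_max_right n N) h]

lemma walsh_congr {n : ℕ} {g g' : DyadicGroup} (h : ∀ j, n.testBit j = true → g j = g' j) :
    walsh n g = walsh n g' := by
  unfold walsh
  refine Finset.prod_congr rfl fun j _ => ?_
  by_cases hb : n.testBit j
  · rw [h j hb]
  · simp [hb]

lemma walsh_pm (n : ℕ) (g : DyadicGroup) : walsh n g = 1 ∨ walsh n g = -1 := by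
  unfold walsh
  refine Finset.prod_induction _ (fun x => x = 1 ∨ x = -1) ?_ (Or.inl rfl) fun j _ => ?_
  · rintro a b (rfl | rfl) (rfl | rfl) <;> norm_num
  · split
    · exact Or.inr rfl
    · exact Or.inl rfl

lemma walshValD_pm {d : ℕ} (k : ℕ) (n m : Fin d → ℕ) :
    walshValD k n m = 1 ∨ walshValD k n m = -1 := by
  unfold walshValD walshD
  refine Finset.prod_induction _ (fun x => x = 1 ∨ x = -1) ?_ (Or.inl rfl) fun l _ => walsh_pm _ _
  rintro a b (rfl | rfl) (rfl | rfl) <;> norm_num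

lemma walsh_two_pow (t : ℕ) (g : DyadicGroup) :
    walsh (2 ^ t) g = if g t = 1 then (-1 : ℝ) else 1 := by
  rw [walsh_eq_prod (Nat.pow_lt_pow_right one_lt_two (Nat.lt_succ_self t)) g,
    Finset.prod_range_succ]
  have h1 : ∀ j ∈ Finset.range t, (if (2 ^ t).testBit j ∧ g j = 1 then (-1 : ℝ) else 1) = 1 := by
    intro j hj
    simp only [Finset.mem_range] at hj
    rw [Nat.testBit_two_pow_of_ne (by omega)]
    simp
  rw [Finset.prod_congr rfl h1, Finset.prod_const_one, one_mul, Nat.testBit_two_pow_self]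
  simp

lemma walshD_two_pow {d : ℕ} (t : ℕ) (g : GD d) :
    walshD (fun _ => 2 ^ t) g = ∏ l, if g l t = 1 then (-1 : ℝ) else 1 := by
  unfold walshD
  exact Finset.prod_congr rfl fun l _ => walsh_two_pow t (g l)

/-! ### interval point lemmas -/

lemma intervalPoint_child {k a b : ℕ} (hb : b < 2) {j : ℕ} (hj : j < k) :
    intervalPoint (k + 1) (2 * a + b) j = intervalPoint k a j := by
  simp only [intervalPoint]
  have h1 : k + 1 - 1 - j = (k - 1 - j) + 1 := by omega
  have h2 : (2 * a + b).testBit ((k - 1 - j) + 1) = a.testBit (k - 1 - j) := by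
    rw [Nat.testBit_succ, (by omega : (2 * a + b) / 2 = a)]
  rw [h1, h2]
  simp [hj, Nat.lt_succ_of_lt hj]

lemma intervalPoint_top {k a b : ℕ} (hb : b < 2) :
    intervalPoint (k + 1) (2 * a + b) k = if b = 1 then (1 : ZMod 2) else 0 := by
  simp only [intervalPoint]
  rw [(by omega : k + 1 - 1 - k = 0), Nat.testBit_zero, (by omega : (2 * a + b) % 2 = b)]
  by_cases h : b = 1 <;> simp [h]

/-! ### cube lemmas -/

lemma mem_dyadicCube {d : ℕ} {k : ℕ} {m : Fin d → ℕ} {g : GD d} :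
    g ∈ dyadicCube k m ↔ ∀ l, g l ∈ dyadicInterval k (m l) := Iff.rfl

lemma cubePoint_mem {d : ℕ} (k : ℕ) (m : Fin d → ℕ) : cubePoint k m ∈ dyadicCube k m := by
  intro l t ht
  simp [cubePoint, intervalPoint, ht]

lemma agree_of_mem_cube {d : ℕ} {k : ℕ} {m : Fin d → ℕ} {g g' : GD d}
    (hg : g ∈ dyadicCube k m) (hg' : g' ∈ dyadicCube k m) :
    ∀ l, ∀ t < k, g l t = g' l t := by
  intro l t ht
  rw [hg l t ht, hg' l t ht]

lemma child_subset {d : ℕ} (k : ℕ) (m : Fin d → ℕ) (σ : Fin d → Fin 2) :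
    dyadicCube (k + 1) (fun l => 2 * m l + (σ l : ℕ)) ⊆ dyadicCube k m := by
  intro g hg l t ht
  have h1 := hg l t (by omega)
  rw [h1, (by omega : k + 1 - 1 - t = (k - 1 - t) + 1), Nat.testBit_succ,
    (by have := (σ l).isLt; omega : (2 * m l + (σ l : ℕ)) / 2 = m l)]

/-! ### mSeq lemmas -/

lemma mSeq_lt_mSeq : ∀ {s t : ℕ}, 1 ≤ s → s < t → mSeq s < mSeq t := by
  intro s t hs hst
  induction t with
  | zero => omega
  | succ t ih =>
      rcases Nat.lt_or_ge s t with h | h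
      · have h1 := ih h
        have ht1 : t ≠ 0 := by omega
        have : mSeq (t + 1) = 2 * (2 * mSeq t + 1) := by
          simp only [mSeq]; rw [if_neg ht1]
        omega
      · have hst' : s = t := by omega
        subst hst'
        have : mSeq (s + 1) = 2 * (2 * mSeq s + 1) := by
          simp only [mSeq]; rw [if_neg (by omega)]
        omega

lemma mSeq_inj {s t : ℕ} (hs : 1 ≤ s) (ht : 1 ≤ t) (h : mSeq s = mSeq t) : s = t := by
  rcases lt_trichotomy s t with hlt | rfl | hlt
  · exact absurd h (by have := mSeq_lt_mSeq hs hlt; omega)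
  · rfl
  · exact absurd h (by have := mSeq_lt_mSeq ht hlt; omega)

/-! ### membership in `F_s^π` -/

lemma mem_Fspi {d : ℕ} (π : ℕ → (Fin d → ℕ) → Fin d → ℕ) (s : ℕ) (g : GD d) :
    g ∈ Fspi π s ↔
      walshD (fun _ => 2 ^ (2 * mSeq s)) g =
        walshValD (mSeq s)
          (π s fun l => prefixIdx (2 * mSeq s) (g l) / 2 ^ mSeq s)
          (fun l => prefixIdx (2 * mSeq s) (g l) % 2 ^ mSeq s) := by
  have h2q : (0 : ℕ) < 2 ^ mSeq s := pow_pos (by norm_num) _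
  have hsq : (2 : ℕ) ^ (2 * mSeq s) = 2 ^ mSeq s * 2 ^ mSeq s := by
    rw [two_mul, pow_add]
  constructor
  · intro hgF
    simp only [Fspi, Set.mem_iUnion, Set.mem_setOf_eq] at hgF
    obtain ⟨m, hm, m', hm', hcube, heq⟩ := hgF
    have hPl : ∀ l, prefixIdx (2 * mSeq s) (g l) = 2 ^ mSeq s * m l + m' l := by
      intro l
      refine prefixIdx_eq_of_mem ?_ (hcube l)
      have h1 : m l < 2 ^ mSeq s := hm l
      have h2 : m' l < 2 ^ mSeq s := hm' l
      have h3 : 2 ^ mSeq s * (m l + 1) ≤ 2 ^ mSeq s * 2 ^ mSeq s :=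
        Nat.mul_le_mul_left _ (by omega)
      have h4 : 2 ^ mSeq s * (m l + 1) = 2 ^ mSeq s * m l + 2 ^ mSeq s := by ring
      omega
    have hdiv : (fun l => prefixIdx (2 * mSeq s) (g l) / 2 ^ mSeq s) = m := by
      funext l
      rw [hPl l, Nat.mul_add_div h2q, Nat.div_eq_of_lt (hm' l), add_zero]
    have hmod : (fun l => prefixIdx (2 * mSeq s) (g l) % 2 ^ mSeq s) = m' := by
      funext l
      rw [hPl l, Nat.mul_add_mod, Nat.mod_eq_of_lt (hm' l)]
    rw [hdiv, hmod]
    exact heq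
  · intro h
    simp only [Fspi, Set.mem_iUnion, Set.mem_setOf_eq]
    refine ⟨fun l => prefixIdx (2 * mSeq s) (g l) / 2 ^ mSeq s, ?_,
      fun l => prefixIdx (2 * mSeq s) (g l) % 2 ^ mSeq s, ?_, ?_, h⟩
    · intro l
      have hlt := prefixIdx_lt (2 * mSeq s) (g l)
      exact Nat.div_lt_of_lt_mul (by omega)
    · intro l
      exact Nat.mod_lt _ h2q
    · intro l
      have hdm : 2 ^ mSeq s * (prefixIdx (2 * mSeq s) (g l) / 2 ^ mSeq s) +
          prefixIdx (2 * mSeq s) (g l) % 2 ^ mSeq s = prefixIdx (2 * mSeq s) (g l) :=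
        Nat.div_add_mod _ _
      simp only [hdm]
      exact self_mem_dyadicInterval _ _

lemma Fspi_congr {d : ℕ} (π : ℕ → (Fin d → ℕ) → Fin d → ℕ) (s : ℕ) {g g' : GD d}
    (h : ∀ l, ∀ t ≤ 2 * mSeq s, g l t = g' l t) : g ∈ Fspi π s ↔ g' ∈ Fspi π s := by
  rw [mem_Fspi, mem_Fspi]
  have hP : ∀ l, prefixIdx (2 * mSeq s) (g l) = prefixIdx (2 * mSeq s) (g' l) :=
    fun l => prefixIdx_congr fun t ht => h l t (by omega)
  have hW : walshD (fun _ => 2 ^ (2 * mSeq s)) g = walshD (fun _ => 2 ^ (2 * mSeq s)) g' := by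
    rw [walshD_two_pow, walshD_two_pow]
    exact Finset.prod_congr rfl fun l _ => by rw [h l (2 * mSeq s) le_rfl]
  rw [hW]
  simp only [hP]

lemma mem_Fpi {d : ℕ} (π : ℕ → (Fin d → ℕ) → Fin d → ℕ) {g : GD d} :
    g ∈ Fpi π ↔ ∀ s, 1 ≤ s → g ∈ Fspi π s := by
  simp only [Fpi, Set.mem_iInter, Set.mem_Ici]

/-! ### the extension construction -/

/-- The next bit of the canonical extension. -/
def extBit {d : ℕ} (hd : 0 < d) (π : ℕ → (Fin d → ℕ) → Fin d → ℕ) (k : ℕ) (m : Fin d → ℕ)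
    (t : ℕ) (P : Fin d → ℕ) : Fin d → ZMod 2 :=
  if t < k then fun l => intervalPoint k (m l) t
  else if h : ∃ s, 1 ≤ s ∧ t = 2 * mSeq s then
    fun l => if l = ⟨0, hd⟩ ∧
        walshValD (mSeq h.choose) (π h.choose fun l' => P l' / 2 ^ mSeq h.choose)
          (fun l' => P l' % 2 ^ mSeq h.choose) = -1 then 1 else 0
  else fun _ => 0

/-- Running prefix indices of the canonical extension. -/
def extP {d : ℕ} (hd : 0 < d) (π : ℕ → (Fin d → ℕ) → Fin d → ℕ) (k : ℕ) (m : Fin d → ℕ) :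
    ℕ → Fin d → ℕ
  | 0 => fun _ => 0
  | t + 1 => fun l =>
      2 * extP hd π k m t l + (if extBit hd π k m t (extP hd π k m t) l = 1 then 1 else 0)

/-- The canonical extension point. -/
def extG {d : ℕ} (hd : 0 < d) (π : ℕ → (Fin d → ℕ) → Fin d → ℕ) (k : ℕ) (m : Fin d → ℕ) :
    GD d :=
  fun l t => extBit hd π k m t (extP hd π k m t) l

lemma prefixIdx_extG {d : ℕ} (hd : 0 < d) (π : ℕ → (Fin d → ℕ) → Fin d → ℕ) (k : ℕ)
    (m : Fin d → ℕ) (l : Fin d) (t : ℕ) :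
    prefixIdx t (extG hd π k m l) = extP hd π k m t l := by
  induction t with
  | zero => rfl
  | succ t ih => simp only [prefixIdx, extP, ih]; rfl

lemma extG_mem_cube {d : ℕ} (hd : 0 < d) (π : ℕ → (Fin d → ℕ) → Fin d → ℕ) (k : ℕ)
    (m : Fin d → ℕ) : extG hd π k m ∈ dyadicCube k m := by
  intro l t ht
  show extBit hd π k m t _ l = _
  rw [extBit, if_pos ht]
  simp [intervalPoint, ht]

lemma extG_eq_cubePoint {d : ℕ} (hd : 0 < d) (π : ℕ → (Fin d → ℕ) → Fin d → ℕ) (k : ℕ)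
    (m : Fin d → ℕ) (l : Fin d) {t : ℕ} (ht : t < k) :
    extG hd π k m l t = cubePoint k m l t := by
  simp only [extG, extBit, if_pos ht, cubePoint]

lemma extG_mem_Fspi_of_ge {d : ℕ} (hd : 0 < d) (π : ℕ → (Fin d → ℕ) → Fin d → ℕ) (k : ℕ)
    (m : Fin d → ℕ) {s : ℕ} (hs : 1 ≤ s) (hks : k ≤ 2 * mSeq s) :
    extG hd π k m ∈ Fspi π s := by
  rw [mem_Fspi]
  simp only [prefixIdx_extG]
  set t := 2 * mSeq s with htdef
  set P := extP hd π k m t with hPdef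
  set E := walshValD (mSeq s) (π s fun l' => P l' / 2 ^ mSeq s)
    (fun l' => P l' % 2 ^ mSeq s) with hE
  have hex : ∃ s', 1 ≤ s' ∧ t = 2 * mSeq s' := ⟨s, hs, rfl⟩
  have hs' : hex.choose = s :=
    mSeq_inj hex.choose_spec.1 hs (by have := hex.choose_spec.2; omega)
  have hbit : ∀ l, extG hd π k m l t =
      (if l = ⟨0, hd⟩ ∧ E = -1 then (1 : ZMod 2) else 0) := by
    intro l
    show extBit hd π k m t P l = _
    simp only [extBit]
    rw [if_neg (by omega), dif_pos hex]
    simp only [hs', ← hE]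
  rw [walshD_two_pow]
  have hpm : E = 1 ∨ E = -1 := walshValD_pm _ _ _
  rcases hpm with h1 | h1
  · rw [h1]
    refine Finset.prod_eq_one fun l _ => ?_
    have hneg : ¬(l = (⟨0, hd⟩ : Fin d) ∧ E = -1) := by
      rintro ⟨-, h2⟩
      rw [h1] at h2
      norm_num at h2
    have hz : extG hd π k m l t = 0 := by
      rw [hbit l]
      exact if_neg hneg
    rw [hz]
    simp
  · rw [h1]
    rw [← Finset.mul_prod_erase Finset.univ _ (Finset.mem_univ (⟨0, hd⟩ : Fin d))]
    have hc : (⟨0, hd⟩ : Fin d) = ⟨0, hd⟩ ∧ E = -1 := ⟨rfl, h1⟩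
    have hl0 : extG hd π k m ⟨0, hd⟩ t = 1 := by
      rw [hbit]
      exact if_pos hc
    have hrest : ∀ l ∈ Finset.univ.erase (⟨0, hd⟩ : Fin d),
        (if extG hd π k m l t = 1 then (-1 : ℝ) else 1) = 1 := by
      intro l hl
      have hz : extG hd π k m l t = 0 := by
        rw [hbit l]
        exact if_neg (by rintro ⟨h, -⟩; exact Finset.ne_of_mem_erase hl h)
      rw [hz]
      simp
    rw [Finset.prod_congr rfl hrest, Finset.prod_const_one, hl0]
    norm_num

lemma cube_inter_nonempty {d : ℕ} (hd : 0 < d) (π : ℕ → (Fin d → ℕ) → Fin d → ℕ) (k : ℕ)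
    (m : Fin d → ℕ)
    (h : ∀ s, 1 ≤ s → 2 * mSeq s < k → cubePoint k m ∈ Fspi π s) :
    (dyadicCube k m ∩ Fpi π).Nonempty := by
  refine ⟨extG hd π k m, extG_mem_cube hd π k m, ?_⟩
  rw [mem_Fpi]
  intro s hs
  rcases Nat.lt_or_ge (2 * mSeq s) k with hlt | hge
  · refine (Fspi_congr π s fun l t ht => ?_).2 (h s hs hlt)
    exact extG_eq_cubePoint hd π k m l (by omega)
  · exact extG_mem_Fspi_of_ge hd π k m hs hge

lemma cube_inter_Fpi_iff {d : ℕ} (hd : 0 < d) (π : ℕ → (Fin d → ℕ) → Fin d → ℕ) (k : ℕ)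
    (m : Fin d → ℕ) :
    (dyadicCube k m ∩ Fpi π).Nonempty ↔
      ∀ s, 1 ≤ s → 2 * mSeq s < k → cubePoint k m ∈ Fspi π s := by
  constructor
  · rintro ⟨g, hgc, hgF⟩ s hs hsk
    have hgs : g ∈ Fspi π s := (mem_Fpi π).1 hgF s hs
    exact (Fspi_congr π s fun l t ht =>
      agree_of_mem_cube hgc (cubePoint_mem k m) l t (by omega)).1 hgs
  · exact cube_inter_nonempty hd π k m

/-! ### children of a cube -/

lemma childA {d : ℕ} (hd : 0 < d) (π : ℕ → (Fin d → ℕ) → Fin d → ℕ) {K : ℕ} {m : Fin d → ℕ}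
    (hK : ¬ ∃ s, 1 ≤ s ∧ K = 2 * mSeq s)
    (hpar : (dyadicCube K m ∩ Fpi π).Nonempty) (σ : Fin d → Fin 2) :
    (dyadicCube (K + 1) (fun l => 2 * m l + (σ l : ℕ)) ∩ Fpi π).Nonempty := by
  rw [cube_inter_Fpi_iff hd]
  intro s hs hsk
  have hslt : 2 * mSeq s < K := by
    rcases Nat.lt_or_ge (2 * mSeq s) K with h | h
    · exact h
    · exact absurd ⟨s, hs, by omega⟩ hK
  have hpar' := (cube_inter_Fpi_iff hd π K m).1 hpar s hs hslt
  refine (Fspi_congr π s fun l t ht => ?_).1 hpar'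
  exact agree_of_mem_cube (cubePoint_mem K m)
    (child_subset K m σ (cubePoint_mem _ _)) l t (by omega)

lemma childpoint_mem_Fspi_iff {d : ℕ} (π : ℕ → (Fin d → ℕ) → Fin d → ℕ) {K : ℕ}
    {m : Fin d → ℕ} (hm : ∀ l, m l < 2 ^ K) {s₀ : ℕ} (hKs : K = 2 * mSeq s₀)
    (σ : Fin d → Fin 2) :
    (cubePoint (K + 1) (fun l => 2 * m l + (σ l : ℕ)) ∈ Fspi π s₀) ↔
      (∏ l, if σ l = 1 then (-1 : ℝ) else 1) =
        walshValD (mSeq s₀) (π s₀ fun l => m l / 2 ^ mSeq s₀)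
          (fun l => m l % 2 ^ mSeq s₀) := by
  rw [mem_Fspi]
  have hcp : cubePoint (K + 1) (fun l => 2 * m l + (σ l : ℕ)) ∈ dyadicCube K m :=
    child_subset K m σ (cubePoint_mem _ _)
  have hP : ∀ l, prefixIdx (2 * mSeq s₀)
      (cubePoint (K + 1) (fun l => 2 * m l + (σ l : ℕ)) l) = m l := by
    intro l
    rw [← hKs]
    exact prefixIdx_eq_of_mem (hm l) (hcp l)
  simp only [hP]
  have hW : walshD (fun _ => 2 ^ (2 * mSeq s₀))
      (cubePoint (K + 1) fun l => 2 * m l + (σ l : ℕ)) =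
      ∏ l, if σ l = 1 then (-1 : ℝ) else 1 := by
    rw [walshD_two_pow]
    refine Finset.prod_congr rfl fun l _ => ?_
    have htop : cubePoint (K + 1) (fun l => 2 * m l + (σ l : ℕ)) l (2 * mSeq s₀) =
        if (σ l : ℕ) = 1 then (1 : ZMod 2) else 0 := by
      rw [← hKs]
      exact intervalPoint_top (σ l).isLt
    rw [htop]
    by_cases h : σ l = 1
    · simp [h]
    · have hv : (σ l : ℕ) ≠ 1 := fun hc => h (by apply Fin.ext; simpa using hc)
      simp [h, hv]
  rw [hW]

lemma childB {d : ℕ} (hd : 0 < d) (π : ℕ → (Fin d → ℕ) → Fin d → ℕ) {K : ℕ}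
    {m : Fin d → ℕ} (hm : ∀ l, m l < 2 ^ K) {s₀ : ℕ} (hs₀ : 1 ≤ s₀)
    (hKs : K = 2 * mSeq s₀) (hpar : (dyadicCube K m ∩ Fpi π).Nonempty)
    (σ : Fin d → Fin 2) :
    (dyadicCube (K + 1) (fun l => 2 * m l + (σ l : ℕ)) ∩ Fpi π).Nonempty ↔
      (∏ l, if σ l = 1 then (-1 : ℝ) else 1) =
        walshValD (mSeq s₀) (π s₀ fun l => m l / 2 ^ mSeq s₀)
          (fun l => m l % 2 ^ mSeq s₀) := by
  rw [cube_inter_Fpi_iff hd]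
  constructor
  · intro h
    exact (childpoint_mem_Fspi_iff π hm hKs σ).1 (h s₀ hs₀ (by omega))
  · intro h s hs hsk
    rcases Nat.lt_or_ge (2 * mSeq s) K with hlt | hge
    · have hpar' := (cube_inter_Fpi_iff hd π K m).1 hpar s hs hlt
      refine (Fspi_congr π s fun l t ht => ?_).1 hpar'
      exact agree_of_mem_cube (cubePoint_mem K m)
        (child_subset K m σ (cubePoint_mem _ _)) l t (by omega)
    · have hseq : s = s₀ := mSeq_inj hs hs₀ (by omega)
      subst hseq
      exact (childpoint_mem_Fspi_iff π hm hKs σ).2 h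

/-! ### sums over boxes and sign sums -/

lemma mem_boxLt {d : ℕ} {N : Fin d → ℕ} {m : Fin d → ℕ} :
    m ∈ boxLt N ↔ ∀ l, m l < N l := by
  simp [boxLt, Fintype.mem_piFinset]

lemma sum_boxLt_succ {d : ℕ} (k : ℕ) (f : (Fin d → ℕ) → ℂ) :
    ∑ m' ∈ boxLt (fun _ : Fin d => 2 ^ (k + 1)), f m' =
      ∑ m ∈ boxLt (fun _ : Fin d => 2 ^ k), ∑ σ : Fin d → Fin 2,
        f (fun l => 2 * m l + (σ l : ℕ)) := by
  have h2 : (2 : ℕ) ^ (k + 1) = 2 * 2 ^ k := by rw [pow_succ]; ring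
  have hprod : (∑ p ∈ (boxLt (fun _ : Fin d => 2 ^ k)) ×ˢ (Finset.univ : Finset (Fin d → Fin 2)),
      f (fun l => 2 * p.1 l + (p.2 l : ℕ))) =
      ∑ m ∈ boxLt (fun _ : Fin d => 2 ^ k), ∑ σ : Fin d → Fin 2,
        f (fun l => 2 * m l + (σ l : ℕ)) := Finset.sum_product _ _ _
  rw [← hprod]
  refine Finset.sum_nbij' (i := fun m' => ((fun l => m' l / 2),
      (fun l => (⟨m' l % 2, Nat.mod_lt _ (by norm_num)⟩ : Fin 2))))
    (j := fun p => fun l => 2 * p.1 l + (p.2 l : ℕ)) ?_ ?_ ?_ ?_ ?_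
  · intro m' hm'
    refine Finset.mem_product.2 ⟨mem_boxLt.2 fun l => ?_, Finset.mem_univ _⟩
    show m' l / 2 < 2 ^ k
    have := mem_boxLt.1 hm' l
    omega
  · intro p hp
    refine mem_boxLt.2 fun l => ?_
    show 2 * p.1 l + (p.2 l : ℕ) < 2 ^ (k + 1)
    have h1 := mem_boxLt.1 (Finset.mem_product.1 hp).1 l
    have h3 := (p.2 l).isLt
    omega
  · intro m' _
    funext l
    show 2 * (m' l / 2) + m' l % 2 = m' l
    omega
  · intro p _
    have h3 : ∀ l, ((p.2 l : ℕ)) < 2 := fun l => (p.2 l).isLt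
    refine Prod.ext_iff.2 ⟨funext fun l => ?_, funext fun l => ?_⟩
    · show (2 * p.1 l + (p.2 l : ℕ)) / 2 = p.1 l
      have := h3 l; omega
    · apply Fin.ext
      show (2 * p.1 l + (p.2 l : ℕ)) % 2 = (p.2 l : ℕ)
      have := h3 l; omega
  · intro m' _
    refine congrArg f (funext fun l => ?_)
    show m' l = 2 * (m' l / 2) + m' l % 2
    omega

lemma walshValD_child {d : ℕ} {k : ℕ} {n : Fin d → ℕ} (m : Fin d → ℕ)
    (hn : ∀ l, n l < 2 ^ k) (σ : Fin d → Fin 2) :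
    walshValD (k + 1) n (fun l => 2 * m l + (σ l : ℕ)) = walshValD k n m := by
  unfold walshValD walshD cubePoint
  refine Finset.prod_congr rfl fun l _ => ?_
  refine walsh_congr fun j hj => ?_
  have hjk : j < k := by
    by_contra hc
    rw [Nat.testBit_lt_two_pow
      (lt_of_lt_of_le (hn l) (Nat.pow_le_pow_right (by norm_num) (by omega)))] at hj
    exact Bool.false_ne_true hj
  exact intervalPoint_child (σ l).isLt hjk

lemma fourierCoeffAt_succ {d : ℕ} {τ : ℕ → (Fin d → ℕ) → ℂ} (hτ : IsQuasimeasure τ)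
    {n : Fin d → ℕ} {k : ℕ} (hn : ∀ l, n l < 2 ^ k) :
    fourierCoeffAt τ n (k + 1) = fourierCoeffAt τ n k := by
  unfold fourierCoeffAt
  rw [sum_boxLt_succ k (fun m' => (walshValD (k + 1) n m' : ℂ) * τ (k + 1) m')]
  refine Finset.sum_congr rfl fun m hm => ?_
  have hmlt : ∀ l, m l < 2 ^ k := mem_boxLt.1 hm
  rw [hτ k m hmlt, Finset.mul_sum]
  refine Finset.sum_congr rfl fun σ _ => ?_
  rw [walshValD_child m hn σ]

lemma fourierCoeffAt_eq_of_le {d : ℕ} {τ : ℕ → (Fin d → ℕ) → ℂ} (hτ : IsQuasimeasure τ)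
    {n : Fin d → ℕ} {k₀ : ℕ} (hn : ∀ l, n l < 2 ^ k₀) :
    ∀ k, k₀ ≤ k → fourierCoeffAt τ n k = fourierCoeffAt τ n k₀ := by
  intro k
  induction k with
  | zero =>
      intro hk
      have h0 : k₀ = 0 := by omega
      rw [h0]
  | succ k ih =>
      intro hk
      rcases Nat.eq_or_lt_of_le hk with h | h
      · rw [← h]
      · rw [fourierCoeffAt_succ hτ fun l =>
          lt_of_lt_of_le (hn l) (Nat.pow_le_pow_right (by norm_num) (by omega))]
        exact ih (by omega)

lemma coeff_zero_eq_one {d : ℕ} {τ : ℕ → (Fin d → ℕ) → ℂ} (hτq : IsQuasimeasure τ)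
    (h1 : τ 0 (fun _ => 0) = 1) (k : ℕ) : fourierCoeffAt τ (fun _ => 0) k = 1 := by
  have h0 : fourierCoeffAt τ (fun _ : Fin d => 0) 0 = 1 := by
    unfold fourierCoeffAt
    have hbox : boxLt (fun _ : Fin d => 2 ^ 0) = {fun _ => 0} := by
      ext m
      rw [Finset.mem_singleton, mem_boxLt]
      simp [funext_iff, Nat.lt_one_iff]
    rw [hbox, Finset.sum_singleton]
    have hw : walshValD 0 (fun _ : Fin d => 0) (fun _ => 0) = 1 := by
      unfold walshValD walshD
      simp [walsh]
    rw [hw, h1]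
    norm_num
  induction k with
  | zero => exact h0
  | succ k ih =>
      rw [fourierCoeffAt_succ hτq fun _ => pow_pos (by norm_num : (0:ℕ) < 2) k, ih]

lemma testBit_between {a K : ℕ} (h1 : 2 ^ K ≤ a) (h2 : a < 2 ^ (K + 1)) :
    a.testBit K = true := by
  have hdiv : a / 2 ^ K = 1 := by
    refine Nat.div_eq_of_lt_le (by omega) ?_
    have h3 : (2 : ℕ) ^ (K + 1) = 2 ^ K * 2 := pow_succ 2 K
    omega
  rw [Nat.testBit_eq_decide_div_mod_eq, hdiv]
  decide

lemma sumA {d : ℕ} (n : Fin d → ℕ) (K : ℕ) (l₁ : Fin d) (h₁ : (n l₁).testBit K = true) :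
    ∑ σ : Fin d → Fin 2, ∏ l, (if (n l).testBit K ∧ σ l = 1 then (-1 : ℝ) else 1) = 0 := by
  rw [← Fintype.piFinset_univ, ← Finset.prod_univ_sum (fun _ : Fin d => (Finset.univ : Finset (Fin 2)))
    (fun l b => if (n l).testBit K ∧ b = 1 then (-1 : ℝ) else 1)]
  refine Finset.prod_eq_zero (Finset.mem_univ l₁) ?_
  rw [Fin.sum_univ_two]
  norm_num [h₁]

lemma sumB {d : ℕ} (n : Fin d → ℕ) (K : ℕ) {l₀ l₁ : Fin d}
    (h₀ : (n l₀).testBit K = false) (h₁ : (n l₁).testBit K = true) (ε : ℝ) :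
    ∑ σ ∈ Finset.univ.filter (fun σ : Fin d → Fin 2 =>
        (∏ l, if σ l = 1 then (-1 : ℝ) else 1) = ε),
      ∏ l, (if (n l).testBit K ∧ σ l = 1 then (-1 : ℝ) else 1) = 0 := by
  have hne : l₀ ≠ l₁ := by
    rintro rfl
    rw [h₀] at h₁
    exact Bool.false_ne_true h₁
  set flp : Fin 2 → Fin 2 := fun b => if b = 1 then 0 else 1 with hflip
  have hflipflip : ∀ b, flp (flp b) = b := by decide
  have hflipne : ∀ b, flp b ≠ b := by decide
  have hsflip : ∀ b, (if flp b = 1 then (-1 : ℝ) else 1) = -(if b = 1 then (-1 : ℝ) else 1) := by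
    intro b
    fin_cases b <;> simp [hflip]
  set F : (Fin d → Fin 2) → Fin d → Fin 2 :=
    fun σ l => if l = l₀ ∨ l = l₁ then flp (σ l) else σ l with hF
  have hFl0 : ∀ σ, F σ l₀ = flp (σ l₀) := fun σ => by simp [hF]
  have hFl1 : ∀ σ, F σ l₁ = flp (σ l₁) := fun σ => by simp [hF]
  have hFrest : ∀ (v : Fin d → Fin 2), ∀ l ∈ (Finset.univ.erase l₀).erase l₁, F v l = v l := by
    intro v l hl
    obtain ⟨hne1, hl2⟩ := Finset.mem_erase.1 hl
    obtain ⟨hne0, -⟩ := Finset.mem_erase.1 hl2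
    simp only [hF]
    rw [if_neg (by tauto)]
  have hdecomp : ∀ (e : Fin d → Fin 2 → ℝ) (v : Fin d → Fin 2),
      ∏ l, e l (v l) = e l₀ (v l₀) * (e l₁ (v l₁) *
        ∏ l ∈ (Finset.univ.erase l₀).erase l₁, e l (v l)) := by
    intro e v
    rw [← Finset.mul_prod_erase Finset.univ (fun l => e l (v l)) (Finset.mem_univ l₀),
      ← Finset.mul_prod_erase _ (fun l => e l (v l))
        (Finset.mem_erase.2 ⟨hne.symm, Finset.mem_univ l₁⟩)]
  have htail : ∀ (e : Fin d → Fin 2 → ℝ) (σ : Fin d → Fin 2),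
      (∏ l ∈ (Finset.univ.erase l₀).erase l₁, e l (F σ l)) =
        ∏ l ∈ (Finset.univ.erase l₀).erase l₁, e l (σ l) :=
    fun e σ => Finset.prod_congr rfl fun l hl => by rw [hFrest σ l hl]
  refine Finset.sum_involution (fun σ _ => F σ) ?_ ?_ ?_ ?_
  · intro σ hσ
    show (∏ l, if (n l).testBit K ∧ σ l = 1 then (-1 : ℝ) else 1) +
      (∏ l, if (n l).testBit K ∧ F σ l = 1 then (-1 : ℝ) else 1) = 0
    rw [hdecomp (fun l b => if (n l).testBit K ∧ b = 1 then (-1 : ℝ) else 1) σ,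
      hdecomp (fun l b => if (n l).testBit K ∧ b = 1 then (-1 : ℝ) else 1) (F σ),
      htail (fun l b => if (n l).testBit K ∧ b = 1 then (-1 : ℝ) else 1) σ,
      hFl0 σ, hFl1 σ]
    simp only [h₀, h₁, Bool.false_eq_true, false_and, if_false, true_and]
    rw [hsflip (σ l₁)]
    ring
  · intro σ _ _ hFe
    have h2 : F σ l₁ = σ l₁ := congrFun hFe l₁
    rw [hFl1 σ] at h2
    exact hflipne (σ l₁) h2
  · intro σ hσ
    show F σ ∈ Finset.univ.filter _
    rw [Finset.mem_filter] at hσ ⊢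
    refine ⟨Finset.mem_univ _, ?_⟩
    rw [hdecomp (fun _ b => if b = 1 then (-1 : ℝ) else 1) (F σ),
      htail (fun _ b => if b = 1 then (-1 : ℝ) else 1) σ,
      hFl0 σ, hFl1 σ, hsflip (σ l₀), hsflip (σ l₁)]
    rw [← hσ.2, hdecomp (fun _ b => if b = 1 then (-1 : ℝ) else 1) σ]
    ring
  · intro σ _
    show F (F σ) = σ
    funext l
    by_cases h : l = l₀ ∨ l = l₁
    · simp only [hF, if_pos h, hflipflip]
    · simp only [hF, if_neg h]

lemma walshValD_child_split {d : ℕ} {K : ℕ} (n m : Fin d → ℕ) (hn : ∀ l, n l < 2 ^ (K + 1))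
    (σ : Fin d → Fin 2) :
    walshValD (K + 1) n (fun l => 2 * m l + (σ l : ℕ)) =
      (∏ l, ∏ j ∈ Finset.range K,
          if (n l).testBit j ∧ intervalPoint K (m l) j = 1 then (-1 : ℝ) else 1) *
        ∏ l, if (n l).testBit K ∧ σ l = 1 then (-1 : ℝ) else 1 := by
  unfold walshValD walshD cubePoint
  rw [← Finset.prod_mul_distrib]
  refine Finset.prod_congr rfl fun l _ => ?_
  rw [walsh_eq_prod (hn l) _, Finset.prod_range_succ]
  congr 1
  · refine Finset.prod_congr rfl fun j hj => ?_
    rw [intervalPoint_child (σ l).isLt (Finset.mem_range.1 hj)]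
  · rw [intervalPoint_top (σ l).isLt]
    by_cases h : σ l = 1
    · simp [h]
    · have hv : (σ l : ℕ) ≠ 1 := fun hc => h (by apply Fin.ext; simpa using hc)
      simp [h, hv]

end S11

/-- `(τ^π)̂_𝟎 = 1` and `(τ^π)̂_𝐧 = 0` for every nonzero `𝐧` lying in no
block `B_{2m_s}`, `s ≥ 1`. -/
theorem statement11 (d : ℕ) (hd : 2 ≤ d) (π : PermSeq d)
    (τ : ℕ → (Fin d → ℕ) → ℂ) (hτ : IsTauOf (Fpi π.f) τ) :
    (∀ k : ℕ, fourierCoeffAt τ (fun _ => 0) k = 1) ∧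
    (∀ n : Fin d → ℕ, n ≠ (fun _ => 0) →
      (∀ s : ℕ, 1 ≤ s →
        ¬(∀ l, 2 ^ (2 * mSeq s) ≤ n l ∧ n l < 2 ^ (2 * mSeq s + 1))) →
      ∀ k : ℕ, (∀ l, n l < 2 ^ k) → fourierCoeffAt τ n k = 0) := by
  obtain ⟨hτq, hτ1, hτ0, hτsplit⟩ := hτ
  have hd0 : 0 < d := by omega
  constructor
  · exact fun k => S11.coeff_zero_eq_one hτq hτ1 k
  · intro n hn0 hblock k hnk
    have hex : ∃ j : ℕ, ∀ l, n l < 2 ^ j := ⟨k, hnk⟩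
    have hk₀p : ∀ l, n l < 2 ^ Nat.find hex := Nat.find_spec hex
    have hk₀le : Nat.find hex ≤ k := Nat.find_min' hex hnk
    set k₀ := Nat.find hex with hk₀def
    have hk₀pos : 1 ≤ k₀ := by
      by_contra hc
      apply hn0
      funext l
      have h := hk₀p l
      have h0 : k₀ = 0 := by omega
      rw [h0, pow_zero] at h
      omega
    have hKmin : ¬ ∀ l, n l < 2 ^ (k₀ - 1) := Nat.find_min hex (by omega)
    push_neg at hKmin
    obtain ⟨l₁, hl₁⟩ := hKmin
    set K := k₀ - 1 with hKdef
    have hk₀K : k₀ = K + 1 := by omega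
    have hnK1 : ∀ l, n l < 2 ^ (K + 1) := by rw [← hk₀K]; exact hk₀p
    have hbit₁ : (n l₁).testBit K = true := S11.testBit_between hl₁ (hnK1 l₁)
    rw [S11.fourierCoeffAt_eq_of_le hτq hk₀p k hk₀le, hk₀K]
    unfold fourierCoeffAt
    rw [S11.sum_boxLt_succ K (fun m' => (walshValD (K + 1) n m' : ℂ) * τ (K + 1) m')]
    refine Finset.sum_eq_zero fun m hm => ?_
    have hmlt : ∀ l, m l < 2 ^ K := S11.mem_boxLt.1 hm
    have hchildlt : ∀ (σ : Fin d → Fin 2) l, 2 * m l + (σ l : ℕ) < 2 ^ (K + 1) := by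
      intro σ l
      have h1 := hmlt l
      have h2 := (σ l).isLt
      have h3 : (2 : ℕ) ^ (K + 1) = 2 * 2 ^ K := by rw [pow_succ]; ring
      omega
    by_cases hpz : τ K m = 0
    · refine Finset.sum_eq_zero fun σ _ => ?_
      have hdisj : dyadicCube K m ∩ Fpi π.f = ∅ := (hτ0 K m hmlt).1 hpz
      have hcz : τ (K + 1) (fun l => 2 * m l + (σ l : ℕ)) = 0 := by
        rw [hτ0 (K + 1) _ (hchildlt σ)]
        have hsub : dyadicCube (K + 1) (fun l => 2 * m l + (σ l : ℕ)) ∩ Fpi π.f ⊆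
            dyadicCube K m ∩ Fpi π.f :=
          Set.inter_subset_inter_left _ (S11.child_subset K m σ)
        rw [hdisj] at hsub
        exact Set.subset_empty_iff.1 hsub
      rw [hcz, mul_zero]
    · have hmeets : (dyadicCube K m ∩ Fpi π.f).Nonempty := by
        rw [Set.nonempty_iff_ne_empty]
        exact fun h => hpz ((hτ0 K m hmlt).2 h)
      by_cases hKc : ∃ s, 1 ≤ s ∧ K = 2 * mSeq s
      · -- Case B : `K` is a constraint level
        obtain ⟨s₀, hs₀, hKs⟩ := hKc
        have hb := hblock s₀ hs₀
        rw [not_forall] at hb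
        obtain ⟨l₀, hl₀⟩ := hb
        have hl₀K : n l₀ < 2 ^ K := by
          by_contra hc
          push_neg at hc
          refine hl₀ ⟨by rw [← hKs]; exact hc, ?_⟩
          rw [show 2 * mSeq s₀ + 1 = K + 1 from by omega]
          exact hnK1 l₀
        have hbit₀ : (n l₀).testBit K = false := Nat.testBit_lt_two_pow hl₀K
        have hiff : ∀ σ : Fin d → Fin 2,
            (dyadicCube (K + 1) (fun l => 2 * m l + (σ l : ℕ)) ∩ Fpi π.f).Nonempty ↔
            (∏ l, if σ l = 1 then (-1 : ℝ) else 1) =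
              walshValD (mSeq s₀) (π.f s₀ fun l => m l / 2 ^ mSeq s₀)
                (fun l => m l % 2 ^ mSeq s₀) :=
          fun σ => S11.childB hd0 π.f hmlt hs₀ hKs hmeets σ
        have hval : ∀ σ : Fin d → Fin 2, τ (K + 1) (fun l => 2 * m l + (σ l : ℕ)) =
            if (∏ l, if σ l = 1 then (-1 : ℝ) else 1) =
              walshValD (mSeq s₀) (π.f s₀ fun l => m l / 2 ^ mSeq s₀)
                (fun l => m l % 2 ^ mSeq s₀) then
              τ K m / ((Finset.univ.filter fun σ' : Fin d → Fin 2 =>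
                (dyadicCube (K + 1) (fun l => 2 * m l + (σ' l : ℕ)) ∩
                  Fpi π.f).Nonempty).card : ℂ)
            else 0 := by
          intro σ
          rw [hτsplit K m hmlt hmeets σ]
          exact if_congr (hiff σ) rfl rfl
        have step : ∀ σ : Fin d → Fin 2,
            (walshValD (K + 1) n (fun l => 2 * m l + (σ l : ℕ)) : ℂ) *
              τ (K + 1) (fun l => 2 * m l + (σ l : ℕ)) =
            if (∏ l, if σ l = 1 then (-1 : ℝ) else 1) =
              walshValD (mSeq s₀) (π.f s₀ fun l => m l / 2 ^ mSeq s₀)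
                (fun l => m l % 2 ^ mSeq s₀) then
              ((∏ l, if (n l).testBit K ∧ σ l = 1 then (-1 : ℝ) else 1 : ℝ) : ℂ) *
                (((∏ l, ∏ j ∈ Finset.range K,
                    if (n l).testBit j ∧ intervalPoint K (m l) j = 1 then (-1 : ℝ) else 1 : ℝ) : ℂ) *
                  (τ K m / ((Finset.univ.filter fun σ' : Fin d → Fin 2 =>
                    (dyadicCube (K + 1) (fun l => 2 * m l + (σ' l : ℕ)) ∩
                      Fpi π.f).Nonempty).card : ℂ)))
            else 0 := by
          intro σ
          rw [hval σ, S11.walshValD_child_split n m hnK1 σ]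
          split_ifs with h
          · push_cast
            ring
          · rw [mul_zero]
        rw [Finset.sum_congr rfl fun σ _ => step σ, ← Finset.sum_filter, ← Finset.sum_mul]
        have hz : (∑ σ ∈ Finset.univ.filter (fun σ : Fin d → Fin 2 =>
            (∏ l, if σ l = 1 then (-1 : ℝ) else 1) =
              walshValD (mSeq s₀) (π.f s₀ fun l => m l / 2 ^ mSeq s₀)
                (fun l => m l % 2 ^ mSeq s₀)),
            ((∏ l, if (n l).testBit K ∧ σ l = 1 then (-1 : ℝ) else 1 : ℝ) : ℂ)) = 0 := by
          rw [← Complex.ofReal_sum, S11.sumB n K hbit₀ hbit₁ _, Complex.ofReal_zero]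
        rw [hz, zero_mul]
      · -- Case A : `K` is not a constraint level
        have hval : ∀ σ : Fin d → Fin 2, τ (K + 1) (fun l => 2 * m l + (σ l : ℕ)) =
            τ K m / ((Finset.univ.filter fun σ' : Fin d → Fin 2 =>
              (dyadicCube (K + 1) (fun l => 2 * m l + (σ' l : ℕ)) ∩
                Fpi π.f).Nonempty).card : ℂ) := by
          intro σ
          rw [hτsplit K m hmlt hmeets σ, if_pos (S11.childA hd0 π.f hKc hmeets σ)]
        have step : ∀ σ : Fin d → Fin 2,
            (walshValD (K + 1) n (fun l => 2 * m l + (σ l : ℕ)) : ℂ) *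
              τ (K + 1) (fun l => 2 * m l + (σ l : ℕ)) =
            ((∏ l, if (n l).testBit K ∧ σ l = 1 then (-1 : ℝ) else 1 : ℝ) : ℂ) *
              (((∏ l, ∏ j ∈ Finset.range K,
                  if (n l).testBit j ∧ intervalPoint K (m l) j = 1 then (-1 : ℝ) else 1 : ℝ) : ℂ) *
                (τ K m / ((Finset.univ.filter fun σ' : Fin d → Fin 2 =>
                  (dyadicCube (K + 1) (fun l => 2 * m l + (σ' l : ℕ)) ∩
                    Fpi π.f).Nonempty).card : ℂ))) := by
          intro σ
          rw [hval σ, S11.walshValD_child_split n m hnK1 σ]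
          push_cast
          ring
        rw [Finset.sum_congr rfl fun σ _ => step σ, ← Finset.sum_mul]
        have hz : (∑ σ : Fin d → Fin 2,
            ((∏ l, if (n l).testBit K ∧ σ l = 1 then (-1 : ℝ) else 1 : ℝ) : ℂ)) = 0 := by
          rw [← Complex.ofReal_sum, S11.sumA n K l₁ hbit₁, Complex.ofReal_zero]
        rw [hz, zero_mul]
end
end
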